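/- arXiv:2408.10956 — 8 statements merged into one kernel-verified Lean document; each statement's English description precedes it below -/
import Mathlib

section
/- Let R be a commutative ring, let b_1, …, b_n ∈ R, and let A ∈ M_n(R) be the matrix with diagonal entries A_{ii} = 1 − b_i, superdiagonal entries A_{i,i+1} = −1, and all other entries 0. Then a matrix Z ∈ M_n(R) satisfies ZA = AZ if and only if Z is upper triangular (Z_{ij} = 0 for i > j) and (b_i − b_j)·Z_{ij} = Z_{i,j−1} − Z_{i+1,j} for all 1 ≤ i < j ≤ n, where Z_{i+1,j} is interpreted as 0 when i + 1 > n. -/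
section Aux

variable {n : ℕ} {R : Type*} [CommRing R]

private lemma aux_mulA (b : Fin n → R) (Z : Matrix (Fin n) (Fin n) R) (i j : Fin n) :
    (Z * (Matrix.of fun i j : Fin n =>
        if i = j then 1 - b i else if (i : ℕ) + 1 = (j : ℕ) then -1 else 0)) i j
      = Z i j * (1 - b j)
        - (if h : 0 < (j : ℕ) then Z i ⟨(j : ℕ) - 1, by have := j.isLt; omega⟩ else 0) := by
  rw [Matrix.mul_apply]
  have key : ∀ k : Fin n, Z i k * (Matrix.of fun i j : Fin n =>
        if i = j then 1 - b i else if (i : ℕ) + 1 = (j : ℕ) then -1 else 0) k j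
      = (if k = j then Z i j * (1 - b j) else 0)
        + (if (k : ℕ) + 1 = (j : ℕ) then -(Z i k) else 0) := by
    intro k
    simp only [Matrix.of_apply]
    split_ifs with h1 h2 h2 <;> first
      | (subst_vars; ring1)
      | (exfalso; omega)
  rw [Finset.sum_congr rfl fun k _ => key k, Finset.sum_add_distrib,
    Finset.sum_ite_eq' Finset.univ j (fun _ => Z i j * (1 - b j))]
  by_cases hj : 0 < (j : ℕ)
  · rw [dif_pos hj]
    have hcong : ∀ k : Fin n, (if (k : ℕ) + 1 = (j : ℕ) then -(Z i k) else 0)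
        = (if k = ⟨(j : ℕ) - 1, by have := j.isLt; omega⟩ then -(Z i k) else 0) := by
      intro k
      apply if_congr _ rfl rfl
      rw [Fin.ext_iff]
      simp only []
      omega
    rw [Finset.sum_congr rfl fun k _ => hcong k,
      Finset.sum_ite_eq' Finset.univ _ (fun k => -(Z i k))]
    simp [sub_eq_add_neg]
  · rw [dif_neg hj]
    rw [Finset.sum_eq_zero (fun k _ => by rw [if_neg (by omega)])]
    simp

private lemma aux_Amul (b : Fin n → R) (Z : Matrix (Fin n) (Fin n) R) (i j : Fin n) :
    ((Matrix.of fun i j : Fin n =>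
        if i = j then 1 - b i else if (i : ℕ) + 1 = (j : ℕ) then -1 else 0) * Z) i j
      = (1 - b i) * Z i j
        - (if h : (i : ℕ) + 1 < n then Z ⟨(i : ℕ) + 1, h⟩ j else 0) := by
  rw [Matrix.mul_apply]
  have key : ∀ k : Fin n, (Matrix.of fun i j : Fin n =>
        if i = j then 1 - b i else if (i : ℕ) + 1 = (j : ℕ) then -1 else 0) i k * Z k j
      = (if i = k then (1 - b i) * Z k j else 0)
        + (if (i : ℕ) + 1 = (k : ℕ) then -(Z k j) else 0) := by
    intro k
    simp only [Matrix.of_apply]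
    split_ifs with h1 h2 h2 <;> first
      | (subst_vars; ring1)
      | (exfalso; omega)
  rw [Finset.sum_congr rfl fun k _ => key k, Finset.sum_add_distrib,
    Finset.sum_ite_eq Finset.univ i (fun k => (1 - b i) * Z k j)]
  by_cases hi : (i : ℕ) + 1 < n
  · rw [dif_pos hi]
    have hcong : ∀ k : Fin n, (if (i : ℕ) + 1 = (k : ℕ) then -(Z k j) else 0)
        = (if k = ⟨(i : ℕ) + 1, hi⟩ then -(Z k j) else 0) := by
      intro k
      apply if_congr _ rfl rfl
      rw [Fin.ext_iff]
      simp only []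
      omega
    rw [Finset.sum_congr rfl fun k _ => hcong k,
      Finset.sum_ite_eq' Finset.univ _ (fun k => -(Z k j))]
    simp [sub_eq_add_neg]
  · rw [dif_neg hi]
    rw [Finset.sum_eq_zero (fun k _ => by rw [if_neg (by have := k.isLt; omega)])]
    simp

end Aux

/-- over a commutative ring `R`, with
`A = diag(1 - b_1, …, 1 - b_n) - Σ_k E_{k,k+1}`, a matrix `Z` commutes with `A` if and only if
`Z` is upper triangular and `(b_i - b_j)·Z_{ij} = Z_{i,j-1} - Z_{i+1,j}` for all `i < j`. -/
theorem stmt0 {n : ℕ} (hn : 1 ≤ n) {R : Type*} [CommRing R] (b : Fin n → R)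
    (Z : Matrix (Fin n) (Fin n) R) :
    Z * (Matrix.of fun i j : Fin n =>
          if i = j then 1 - b i else if (i : ℕ) + 1 = (j : ℕ) then -1 else 0)
      = (Matrix.of fun i j : Fin n =>
          if i = j then 1 - b i else if (i : ℕ) + 1 = (j : ℕ) then -1 else 0) * Z ↔
    ((∀ i j : Fin n, (j : ℕ) < (i : ℕ) → Z i j = 0) ∧
      ∀ i j : Fin n, ∀ h : (i : ℕ) < (j : ℕ),
        (b i - b j) * Z i j
          = Z i ⟨(j : ℕ) - 1, by have := j.isLt; omega⟩
            - Z ⟨(i : ℕ) + 1, by have := j.isLt; omega⟩ j) := by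
  rw [← Matrix.ext_iff]
  constructor
  · intro hc
    have key : ∀ i j : Fin n,
        (b i - b j) * Z i j
          = (if h : 0 < (j : ℕ) then Z i ⟨(j : ℕ) - 1, by have := j.isLt; omega⟩ else 0)
            - (if h : (i : ℕ) + 1 < n then Z ⟨(i : ℕ) + 1, h⟩ j else 0) := by
      intro i j
      have h := hc i j
      rw [aux_mulA, aux_Amul] at h
      linear_combination h
    have tri : ∀ m : ℕ, ∀ i j : Fin n, (i : ℕ) + (j : ℕ) = m → (j : ℕ) < (i : ℕ) →
        Z i j = 0 := by
      intro m
      induction m using Nat.strong_induction_on with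
      | _ m ih =>
        intro i j hm hij
        have hi1 : (i : ℕ) - 1 < n := by have := i.isLt; omega
        have hkey := key ⟨(i : ℕ) - 1, hi1⟩ j
        have hlt : ((⟨(i : ℕ) - 1, hi1⟩ : Fin n) : ℕ) + 1 < n := by
          simp only []
          have := i.isLt; omega
        rw [dif_pos hlt] at hkey
        have hfin : (⟨((⟨(i : ℕ) - 1, hi1⟩ : Fin n) : ℕ) + 1, hlt⟩ : Fin n) = i := by
          rw [Fin.ext_iff]; simp only []; omega
        rw [hfin] at hkey
        -- Z i j = L - (b p - b j) * Z p j
        have hL : (if h : 0 < (j : ℕ)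
            then Z (⟨(i : ℕ) - 1, hi1⟩ : Fin n) ⟨(j : ℕ) - 1, by have := j.isLt; omega⟩
            else 0) = 0 := by
          by_cases hj : 0 < (j : ℕ)
          · rw [dif_pos hj]
            exact ih (((i : ℕ) - 1) + ((j : ℕ) - 1)) (by omega) _ _ rfl (by simp only []; omega)
          · rw [dif_neg hj]
        have hP : (b (⟨(i : ℕ) - 1, hi1⟩ : Fin n) - b j) * Z (⟨(i : ℕ) - 1, hi1⟩ : Fin n) j
            = 0 := by
          rcases Nat.lt_or_ge (j : ℕ) ((i : ℕ) - 1) with h | h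
          · rw [ih (((i : ℕ) - 1) + (j : ℕ)) (by omega) _ _ rfl (by simp only []; exact h)]
            ring
          · have : (⟨(i : ℕ) - 1, hi1⟩ : Fin n) = j := by
              rw [Fin.ext_iff]; simp only []; omega
            rw [this]
            ring
        rw [hL, hP] at hkey
        linear_combination hkey
    refine ⟨fun i j h => tri ((i : ℕ) + (j : ℕ)) i j rfl h, ?_⟩
    intro i j hij
    have h := key i j
    have hj0 : 0 < (j : ℕ) := by omega
    have hi1 : (i : ℕ) + 1 < n := by have := j.isLt; omega
    rw [dif_pos hj0, dif_pos hi1] at h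
    exact h
  · rintro ⟨htri, hrel⟩ i j
    rw [aux_mulA, aux_Amul]
    rcases lt_trichotomy ((i : ℕ)) ((j : ℕ)) with hij | hij | hij
    · have hj0 : 0 < (j : ℕ) := by omega
      have hi1 : (i : ℕ) + 1 < n := by have := j.isLt; omega
      rw [dif_pos hj0, dif_pos hi1]
      linear_combination hrel i j hij
    · have hieq : i = j := by rw [Fin.ext_iff]; exact hij
      subst hieq
      have hL : (if h : 0 < (i : ℕ)
          then Z i ⟨(i : ℕ) - 1, by have := i.isLt; omega⟩ else 0) = 0 := by
        by_cases hi0 : 0 < (i : ℕ)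
        · rw [dif_pos hi0]
          exact htri _ _ (by simp only []; omega)
        · rw [dif_neg hi0]
      have hU : (if h : (i : ℕ) + 1 < n then Z ⟨(i : ℕ) + 1, h⟩ i else 0) = 0 := by
        by_cases hi1 : (i : ℕ) + 1 < n
        · rw [dif_pos hi1]
          exact htri _ _ (by simp only []; omega)
        · rw [dif_neg hi1]
      rw [hL, hU]
      ring
    · have hZ : Z i j = 0 := htri _ _ hij
      have hL : (if h : 0 < (j : ℕ)
          then Z i ⟨(j : ℕ) - 1, by have := j.isLt; omega⟩ else 0) = 0 := by
        by_cases hj0 : 0 < (j : ℕ)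
        · rw [dif_pos hj0]
          exact htri _ _ (by simp only []; omega)
        · rw [dif_neg hj0]
      have hU : (if h : (i : ℕ) + 1 < n then Z ⟨(i : ℕ) + 1, h⟩ j else 0) = 0 := by
        by_cases hi1 : (i : ℕ) + 1 < n
        · rw [dif_pos hi1]
          exact htri _ _ (by simp only []; omega)
        · rw [dif_neg hi1]
      rw [hZ, hL, hU]
      ring
end

section
/- The R(T)-algebra R := R(T)[z_{ij} : 1 ≤ i ≤ j ≤ n] / I, where I is the ideal generated by the elements (b_i − b_j)·z_{ij} − z_{i,j−1} + z_{i+1,j} for 1 ≤ i < j ≤ n, is isomorphic as an R(T)-algebra to the polynomial ring R(T)[w_1, …, w_n] in n variables, via an isomorphism sending the class of z_{1j} to w_j for 1 ≤ j ≤ n. -/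
noncomputable section

/-- `R(T) = ℤ[e^{±a_1},…,e^{±a_n}]`, the group algebra over `ℤ` of the free abelian
group `ℤⁿ` of characters. -/
abbrev RT (n : ℕ) : Type := AddMonoidAlgebra ℤ (Fin n →₀ ℤ)

instance (n : ℕ) : IsDomain (RT n) := NoZeroDivisors.to_isDomain _

/-- `e^λ` for a character `λ`. -/
def eexp (n : ℕ) (lam : Fin n →₀ ℤ) : RT n := AddMonoidAlgebra.single lam 1

/-- `b_i = 1 - e^{-a_i}`. -/
def bb (n : ℕ) (i : Fin n) : RT n := 1 - eexp n (-(Finsupp.single i 1))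

/-- The ring automorphism of `R(T)` induced by a permutation of the variables:
`e^{a_i} ↦ e^{a_{σ(i)}}`. -/
def permRT (n : ℕ) (σ : Equiv.Perm (Fin n)) : RT n ≃ₐ[ℤ] RT n :=
  AddMonoidAlgebra.domCongr ℤ ℤ (Finsupp.domCongr (σ : Fin n ≃ Fin n))

/-- Index set of the variables `z_{ij}`, `1 ≤ i ≤ j ≤ n`. -/
abbrev Idx (n : ℕ) : Type := {p : Fin n × Fin n // p.1 ≤ p.2}

/-- An element of `Idx n` from natural-number data. -/
def mkIdx (n : ℕ) (a b : ℕ) (ha : a < n) (hb : b < n) (hab : a ≤ b) : Idx n :=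
  ⟨(⟨a, ha⟩, ⟨b, hb⟩), Fin.mk_le_mk.mpr hab⟩

/-- The defining relation `(b_i - b_j)·z_{ij} - z_{i,j-1} + z_{i+1,j}` (0-based indices). -/
def relGen (n : ℕ) (i j : ℕ) (hi : i < n) (hj : j < n) (hij : i < j) :
    MvPolynomial (Idx n) (RT n) :=
  MvPolynomial.C (bb n ⟨i, hi⟩ - bb n ⟨j, hj⟩) * MvPolynomial.X (mkIdx n i j hi hj hij.le)
    - MvPolynomial.X (mkIdx n i (j - 1) hi (by omega) (by omega))
    + MvPolynomial.X (mkIdx n (i + 1) j (by omega) hj (by omega))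

/-- The ideal of relations of the centralizer family. -/
def centIdeal (n : ℕ) : Ideal (MvPolynomial (Idx n) (RT n)) :=
  Ideal.span {f | ∃ (i j : ℕ) (hi : i < n) (hj : j < n) (hij : i < j), f = relGen n i j hi hj hij}

/-- The ring `R = R(T)[z_{ij}]/I`. -/
abbrev centRing (n : ℕ) : Type := MvPolynomial (Idx n) (RT n) ⧸ centIdeal n

/-- The class of the generator `z_{ij}` in `R` (0-based indices). -/
def zbar (n : ℕ) (i j : ℕ) (hi : i < n) (hj : j < n) (hij : i ≤ j) : centRing n :=
  Ideal.Quotient.mk (centIdeal n) (MvPolynomial.X (mkIdx n i j hi hj hij))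

end


noncomputable section Aux

open MvPolynomial

/-- `b_i` extended by 0 out of range. -/
def bbN (n : ℕ) (k : ℕ) : RT n := if h : k < n then bb n ⟨k, h⟩ else 0

/-- The image of `z_{ij}` in the polynomial ring, defined recursively. -/
def ff (n : ℕ) : ℕ → ℕ → MvPolynomial (Fin n) (RT n)
  | 0, j => if h : j < n then X ⟨j, h⟩ else 0
  | i+1, j => ff n i (j-1) - C (bbN n i - bbN n j) * ff n i j

/-- The forward algebra map on the polynomial ring. -/
def Phi (n : ℕ) : MvPolynomial (Idx n) (RT n) →ₐ[RT n] MvPolynomial (Fin n) (RT n) :=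
  aeval (fun p : Idx n => ff n (p.1.1 : ℕ) (p.1.2 : ℕ))

lemma Phi_X (n : ℕ) (i j : ℕ) (hi : i < n) (hj : j < n) (hij : i ≤ j) :
    Phi n (X (mkIdx n i j hi hj hij)) = ff n i j := by
  simp [Phi, mkIdx]

lemma Phi_rel (n : ℕ) (i j : ℕ) (hi : i < n) (hj : j < n) (hij : i < j) :
    Phi n (relGen n i j hi hj hij) = 0 := by
  have h1 : (Phi n) (relGen n i j hi hj hij) =
      (C (bb n ⟨i, hi⟩) - C (bb n ⟨j, hj⟩)) * ff n i j - ff n i (j-1) + ff n (i+1) j := by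
    simp only [relGen, map_add, map_sub, map_mul, Phi_X, algHom_C, algebraMap_eq]
  rw [h1]
  have h2 : ff n (i+1) j = ff n i (j-1) - C (bbN n i - bbN n j) * ff n i j := rfl
  rw [h2, bbN, bbN, dif_pos hi, dif_pos hj, map_sub]
  ring

lemma Phi_vanish (n : ℕ) : ∀ a ∈ centIdeal n, Phi n a = 0 := by
  intro a ha
  have hle : centIdeal n ≤ RingHom.ker (Phi n).toRingHom := by
    rw [centIdeal, Ideal.span_le]
    rintro f ⟨i, j, hi, hj, hij, rfl⟩
    rw [SetLike.mem_coe, RingHom.mem_ker]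
    exact Phi_rel n i j hi hj hij
  exact hle ha

def Phibar (n : ℕ) : centRing n →ₐ[RT n] MvPolynomial (Fin n) (RT n) :=
  Ideal.Quotient.liftₐ (centIdeal n) (Phi n) (Phi_vanish n)

lemma Phibar_mk (n : ℕ) (p : MvPolynomial (Idx n) (RT n)) :
    Phibar n (Ideal.Quotient.mk (centIdeal n) p) = Phi n p := rfl

def Psi (n : ℕ) : MvPolynomial (Fin n) (RT n) →ₐ[RT n] centRing n :=
  aeval (fun j : Fin n =>
    zbar n 0 (j : ℕ) (Nat.lt_of_le_of_lt (Nat.zero_le _) j.isLt) j.isLt (Nat.zero_le _))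

lemma Psi_C (n : ℕ) (r : RT n) :
    Psi n (C r) = algebraMap (RT n) (centRing n) r := aeval_C _ _

set_option synthInstance.maxHeartbeats 1000000 in
lemma Psi_ff (n : ℕ) : ∀ i j (hi : i < n) (hj : j < n) (hij : i ≤ j),
    Psi n (ff n i j) = zbar n i j hi hj hij := by
  intro i
  induction i with
  | zero =>
    intro j hj hj' _
    have h0 : ff n 0 j = X ⟨j, hj'⟩ := dif_pos hj'
    rw [h0]
    simp only [Psi, aeval_X]
  | succ i ih =>
    intro j hi hj hij
    have hij' : i < j := hij
    have h2 : ff n (i+1) j = ff n i (j-1) - C (bbN n i - bbN n j) * ff n i j := rfl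
    rw [h2, map_sub, map_mul, Psi_C,
      ih (j-1) (by omega) (by omega) (by omega),
      ih j (by omega) hj (by omega)]
    have hrel : Ideal.Quotient.mk (centIdeal n) (relGen n i j (by omega) hj hij') = 0 := by
      rw [Ideal.Quotient.eq_zero_iff_mem]
      exact Ideal.subset_span ⟨i, j, by omega, hj, hij', rfl⟩
    rw [relGen, map_add, map_sub, map_mul] at hrel
    rw [bbN, bbN, dif_pos (show i < n by omega), dif_pos hj]
    have hmk : Ideal.Quotient.mk (centIdeal n) (C (bb n ⟨i, by omega⟩ - bb n ⟨j, hj⟩))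
        = algebraMap (RT n) (centRing n) (bb n ⟨i, by omega⟩ - bb n ⟨j, hj⟩) := rfl
    rw [hmk] at hrel
    show zbar n i (j-1) (by omega) (by omega) (by omega)
        - algebraMap (RT n) (centRing n) _ * zbar n i j (by omega) hj (by omega) = _
    unfold zbar
    linear_combination -hrel

lemma Phibar_zbar (n : ℕ) (j : Fin n) :
    Phibar n (zbar n 0 (j : ℕ) (Nat.lt_of_le_of_lt (Nat.zero_le _) j.isLt) j.isLt
      (Nat.zero_le _)) = X j := by
  rw [zbar, Phibar_mk, Phi_X]
  show dite _ _ _ = _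
  rw [dif_pos j.isLt]

theorem stmt1' (n : ℕ) (hn : 2 ≤ n) :
    ∃ φ : centRing n ≃ₐ[RT n] MvPolynomial (Fin n) (RT n),
      ∀ j : Fin n, φ (zbar n 0 (j : ℕ) (Nat.lt_of_le_of_lt (Nat.zero_le _) j.isLt) j.isLt (Nat.zero_le _)) = MvPolynomial.X j := by
  have hPhiPsi : (Phibar n).comp (Psi n) = AlgHom.id (RT n) _ := by
    apply algHom_ext
    intro j
    simp only [AlgHom.comp_apply, Psi, aeval_X, AlgHom.id_apply]
    exact Phibar_zbar n j
  have hPsiPhi : (Psi n).comp (Phibar n) = AlgHom.id (RT n) _ := by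
    apply Ideal.Quotient.algHom_ext (RT n)
    apply algHom_ext
    intro p
    obtain ⟨⟨⟨i, hi⟩, ⟨j, hj⟩⟩, hij⟩ := p
    have hij' : i ≤ j := hij
    simp only [AlgHom.comp_apply, Ideal.Quotient.mkₐ_eq_mk, AlgHom.id_apply]
    have h1 : Phibar n (Ideal.Quotient.mk (centIdeal n) (X ⟨(⟨i, hi⟩, ⟨j, hj⟩), hij⟩))
        = ff n i j := Phi_X n i j hi hj hij'
    rw [h1, Psi_ff n i j hi hj hij']
    rfl
  refine ⟨AlgEquiv.ofAlgHom (Phibar n) (Psi n) hPhiPsi hPsiPhi, fun j => ?_⟩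
  exact Phibar_zbar n j

end Aux

/-- `R(T)[z_{ij}]/I` is isomorphic, as an `R(T)`-algebra, to the polynomial
ring `R(T)[w_1,…,w_n]`, via an isomorphism sending the class of `z_{1j}` to `w_j`. -/
theorem stmt1 (n : ℕ) (hn : 2 ≤ n) :
    ∃ φ : centRing n ≃ₐ[RT n] MvPolynomial (Fin n) (RT n),
      ∀ j : Fin n, φ (zbar n 0 (j : ℕ) (by omega) j.isLt (Nat.zero_le _)) = MvPolynomial.X j := by
  exact stmt1' n hn
end

section
/- Let R := R(T)[z_{ij} : 1 ≤ i ≤ j ≤ n] / I, where I is the ideal generated by (b_i − b_j)·z_{ij} − z_{i,j−1} + z_{i+1,j} for 1 ≤ i < j ≤ n. Then the localization of R at the multiplicative set generated by the classes of z_{11}, z_{22}, …, z_{nn} is a flat R(T)-module. -/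
set_option maxHeartbeats 1000000
set_option synthInstance.maxHeartbeats 400000


noncomputable section

/-- The multiplicative set generated by the classes of the diagonal variables `z_{11},…,z_{nn}`. -/
def diagMonoid (n : ℕ) : Submonoid (centRing n) :=
  Submonoid.closure {x | ∃ i : Fin n, x = zbar n (i : ℕ) (i : ℕ) i.isLt i.isLt le_rfl}

/-- The coordinate ring `O(Z_{GL_n})`: the localization of `R` at the classes of the `z_{ii}`. -/
abbrev centLoc (n : ℕ) : Type := Localization (M := centRing n) (diagMonoid n)

/-! ### Auxiliary development -/

open MvPolynomial

/-- Expression of `z_{ij}` in terms of the last-column variables. -/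
def EE (n : ℕ) (i j : ℕ) (hi : i < n) (hj : j < n) (hij : i ≤ j) :
    MvPolynomial (Fin n) (RT n) :=
  if h : j = n - 1 then MvPolynomial.X ⟨i, hi⟩
  else
    MvPolynomial.C (bb n ⟨i, hi⟩ - bb n ⟨j + 1, by omega⟩) *
        EE n i (j + 1) hi (by omega) (by omega)
      + EE n (i + 1) (j + 1) (by omega) (by omega) (by omega)
  termination_by n - 1 - j
  decreasing_by all_goals omega

lemma EE_last (n : ℕ) (i j : ℕ) (hjl : j = n - 1) (hi : i < n) (hj : j < n) (hij : i ≤ j) :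
    EE n i j hi hj hij = MvPolynomial.X ⟨i, hi⟩ := by
  rw [EE, dif_pos hjl]

lemma EE_step (n : ℕ) (i j' j : ℕ) (hjj : j' + 1 = j) (hi : i < n) (hj : j < n)
    (hj' : j' < n) (hij' : i ≤ j') :
    EE n i j' hi hj' hij' =
      MvPolynomial.C (bb n ⟨i, hi⟩ - bb n ⟨j, hj⟩) * EE n i j hi hj (by omega)
        + EE n (i + 1) j (by omega) hj (by omega) := by
  subst hjj
  rw [EE, dif_neg (by omega)]

/-- The map `MvPolynomial (Idx n) (RT n) →ₐ[RT n] MvPolynomial (Fin n) (RT n)`. -/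
def phi (n : ℕ) : MvPolynomial (Idx n) (RT n) →ₐ[RT n] MvPolynomial (Fin n) (RT n) :=
  MvPolynomial.aeval fun p : Idx n =>
    EE n (p.1.1 : ℕ) (p.1.2 : ℕ) p.1.1.isLt p.1.2.isLt p.2

lemma phi_X (n : ℕ) (i j : ℕ) (hi : i < n) (hj : j < n) (hij : i ≤ j) :
    phi n (MvPolynomial.X (mkIdx n i j hi hj hij)) = EE n i j hi hj hij := by
  simp [phi, mkIdx]

lemma phi_rel (n : ℕ) (i j : ℕ) (hi : i < n) (hj : j < n) (hij : i < j) :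
    phi n (relGen n i j hi hj hij) = 0 := by
  rw [relGen, map_add, map_sub, map_mul, phi_X, phi_X, phi_X,
    EE_step n i (j - 1) j (by omega) hi hj (by omega) (by omega)]
  simp [phi]

lemma centIdeal_le_ker (n : ℕ) : centIdeal n ≤ RingHom.ker (phi n).toRingHom := by
  rw [centIdeal, Ideal.span_le]
  rintro f ⟨i, j, hi, hj, hij, rfl⟩
  exact phi_rel n i j hi hj hij

/-- The induced map on the quotient. -/
def phiBar (n : ℕ) : centRing n →ₐ[RT n] MvPolynomial (Fin n) (RT n) :=
  Ideal.Quotient.liftₐ (centIdeal n) (phi n) fun a ha => centIdeal_le_ker n ha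

lemma phiBar_mk (n : ℕ) (x : MvPolynomial (Idx n) (RT n)) :
    phiBar n (Ideal.Quotient.mk (centIdeal n) x) = phi n x :=
  Ideal.Quotient.liftₐ_apply _ _ _ _

/-- The inverse map, sending `X i` to `z_{i,n-1}`. -/
def psi (n : ℕ) (hn : 0 < n) : MvPolynomial (Fin n) (RT n) →ₐ[RT n] centRing n :=
  MvPolynomial.aeval fun i : Fin n => zbar n (i : ℕ) (n - 1) i.isLt (by omega) (by omega)

lemma algebraMap_centRing (n : ℕ) (r : RT n) :
    algebraMap (RT n) (centRing n) r = Ideal.Quotient.mk (centIdeal n) (MvPolynomial.C r) :=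
  rfl

lemma zbar_step (n : ℕ) (i j' j : ℕ) (hjj : j' + 1 = j) (hi : i < n) (hj : j < n)
    (hj' : j' < n) (hij' : i ≤ j') :
    zbar n i j' hi hj' hij' =
      Ideal.Quotient.mk (centIdeal n) (MvPolynomial.C (bb n ⟨i, hi⟩ - bb n ⟨j, hj⟩)) *
          zbar n i j hi hj (by omega)
        + zbar n (i + 1) j (by omega) hj (by omega) := by
  subst hjj
  have hmem : relGen n i (j' + 1) hi hj (by omega) ∈ centIdeal n :=
    Ideal.subset_span ⟨i, j' + 1, hi, hj, by omega, rfl⟩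
  have h0 : Ideal.Quotient.mk (centIdeal n) (relGen n i (j' + 1) hi hj (by omega)) = 0 :=
    (Ideal.Quotient.eq_zero_iff_mem).mpr hmem
  rw [relGen, map_add, map_sub, map_mul] at h0
  have h0' : Ideal.Quotient.mk (centIdeal n) (MvPolynomial.C (bb n ⟨i, hi⟩ - bb n ⟨j' + 1, hj⟩)) *
        zbar n i (j' + 1) hi hj (by omega)
      - zbar n i j' hi hj' hij' + zbar n (i + 1) (j' + 1) (by omega) hj (by omega) = 0 := h0
  linear_combination -h0'

lemma psi_EE (n : ℕ) (hn : 0 < n) (i j : ℕ) (hi : i < n) (hj : j < n) (hij : i ≤ j) :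
    psi n hn (EE n i j hi hj hij) = zbar n i j hi hj hij := by
  have H : ∀ d : ℕ, ∀ i j (hi : i < n) (hj : j < n) (hij : i ≤ j), n - 1 - j = d →
      psi n hn (EE n i j hi hj hij) = zbar n i j hi hj hij := by
    intro d
    induction d with
    | zero =>
      intro i j hi hj hij hd
      obtain rfl : j = n - 1 := by omega
      rw [EE_last n i (n - 1) rfl]
      simp [psi]
    | succ d ih =>
      intro i j hi hj hij hd
      have hj1 : j + 1 < n := by omega
      rw [EE_step n i j (j + 1) rfl hi hj1 hj hij, map_add, map_mul,
        ih i (j + 1) hi hj1 (by omega) (by omega),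
        ih (i + 1) (j + 1) (by omega) hj1 (by omega) (by omega),
        zbar_step n i j (j + 1) rfl hi hj1 hj hij]
      simp only [psi, MvPolynomial.aeval_C, algebraMap_centRing]
  exact H _ i j hi hj hij rfl

/-- The algebra isomorphism `centRing n ≃ₐ[RT n] MvPolynomial (Fin n) (RT n)`. -/
def centEquiv (n : ℕ) (hn : 0 < n) : centRing n ≃ₐ[RT n] MvPolynomial (Fin n) (RT n) :=
  AlgEquiv.ofAlgHom (phiBar n) (psi n hn)
    (by
      apply MvPolynomial.algHom_ext
      intro i
      show phiBar n (psi n hn (MvPolynomial.X i)) = MvPolynomial.X i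
      have h1 : psi n hn (MvPolynomial.X i)
          = zbar n (i : ℕ) (n - 1) i.isLt (by omega) (by omega) := by simp [psi]
      rw [h1, zbar, phiBar_mk, phi_X, EE_last n _ _ rfl])
    (by
      apply Ideal.Quotient.algHom_ext
      apply MvPolynomial.algHom_ext
      intro p
      have hp : MvPolynomial.X (R := RT n) p
          = MvPolynomial.X (mkIdx n (p.1.1 : ℕ) (p.1.2 : ℕ) p.1.1.isLt p.1.2.isLt p.2) := by
        rfl
      show psi n hn (phiBar n (Ideal.Quotient.mk _ (MvPolynomial.X p)))
        = Ideal.Quotient.mk _ (MvPolynomial.X p)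
      rw [hp, phiBar_mk, phi_X, psi_EE]
      rfl)


set_option synthInstance.maxHeartbeats 1000000 in
/-- the localization of `R = R(T)[z_{ij}]/I` at the multiplicative set generated by
the classes of `z_{11},…,z_{nn}` is a flat `R(T)`-module. -/
theorem stmt2 (n : ℕ) (hn : 2 ≤ n) : Module.Flat (RT n) (centLoc n) := by
  haveI : Module.Flat (RT n) (centRing n) :=
    Module.Flat.of_linearEquiv
      (centEquiv n (by omega)).toLinearEquiv
  haveI : Module.Flat (centRing n) (centLoc n) := Localization.flat (centRing n) (diagMonoid n)
  exact Module.Flat.trans (RT n) (centRing n) (centLoc n)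
end
end

section
/- Let K = Frac(ℤ[e^{±a_1},…,e^{±a_n}]) and let F = K(y_1,…,y_n) be the field of rational functions in n further variables over K. Then the n elements Ω_i := ∏_{k=1}^n (1 − b_i·y_k)^{−1} ∈ F, for 1 ≤ i ≤ n, are algebraically independent over K. -/
noncomputable section

/-- `K = Frac(ℤ[e^{±a_1},…,e^{±a_n}])`. -/
abbrev KK (n : ℕ) : Type := FractionRing (RT n)

/-- `F = K(y_1,…,y_n)`, the rational function field in `n` variables over `K`. -/
abbrev FF (n : ℕ) : Type := FractionRing (MvPolynomial (Fin n) (KK n))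

/-- The image of `b_i` in `F`. -/
def bF (n : ℕ) (i : Fin n) : FF n := algebraMap (KK n) (FF n) (algebraMap (RT n) (KK n) (bb n i))

/-- The variable `y_k` as an element of `F`. -/
def yF (n : ℕ) (k : Fin n) : FF n :=
  algebraMap (MvPolynomial (Fin n) (KK n)) (FF n) (MvPolynomial.X k)

open MvPolynomial

/-- Affine change of variables with invertible matrix preserves algebraic independence. -/
lemma indep_affine {K F : Type*} [Field K] [CommRing F] [Algebra K F] {n : ℕ}
    {v : Fin n → F} (hv : AlgebraicIndependent K v)
    (V : Matrix (Fin n) (Fin n) K) (hV : IsUnit V.det) (c : Fin n → K) :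
    AlgebraicIndependent K
      (fun i => algebraMap K F (c i) + ∑ m, algebraMap K F (V i m) * v m) := by
  rw [algebraicIndependent_iff_injective_aeval] at hv ⊢
  set σf : MvPolynomial (Fin n) K →ₐ[K] MvPolynomial (Fin n) K :=
    aeval (fun i => C (c i) + ∑ m, C (V i m) * X m) with hσ
  set τf : MvPolynomial (Fin n) K →ₐ[K] MvPolynomial (Fin n) K :=
    aeval (fun m => ∑ j, C (V⁻¹ m j) * (X j - C (c j))) with hτ
  have hVW : V * V⁻¹ = 1 := Matrix.mul_nonsing_inv V hV
  have hcompστ : ∀ p, τf (σf p) = p := by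
    have : τf.comp σf = AlgHom.id K (MvPolynomial (Fin n) K) := by
      apply MvPolynomial.algHom_ext
      intro i
      simp only [AlgHom.coe_comp, Function.comp_apply, AlgHom.id_apply, hσ, hτ, aeval_X,
        map_add, map_sum, map_mul, aeval_C, algebraMap_eq]
      have step : ∀ m, C (V i m) * ∑ j, C (V⁻¹ m j) * (X j - C (c j))
          = ∑ j, C (V i m * V⁻¹ m j) * (X j - C (c j)) := by
        intro m
        rw [Finset.mul_sum]
        exact Finset.sum_congr rfl fun j _ => by rw [← mul_assoc, ← C_mul]
      rw [Finset.sum_congr rfl fun m _ => step m, Finset.sum_comm]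
      have step2 : ∀ j, (∑ m, C (V i m * V⁻¹ m j) * (X j - C (c j)))
          = C ((V * V⁻¹) i j) * (X j - C (c j)) := by
        intro j
        rw [← Finset.sum_mul, ← map_sum C, Matrix.mul_apply]
      rw [Finset.sum_congr rfl fun j _ => step2 j, hVW]
      simp only [Matrix.one_apply, apply_ite C, map_one, map_zero, ite_mul, one_mul, zero_mul]
      rw [Finset.sum_ite_eq (Finset.univ : Finset (Fin n)) i (fun j => X j - C (c j))]
      simp [add_sub_cancel]
    intro p
    exact congrArg (fun f => f p) (congrArg DFunLike.coe this)
  have hσinj : Function.Injective σf := Function.LeftInverse.injective hcompστ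
  have hcomp :
      (aeval (fun i => algebraMap K F (c i) + ∑ m, algebraMap K F (V i m) * v m) :
        MvPolynomial (Fin n) K →ₐ[K] F) = (aeval v).comp σf := by
    apply MvPolynomial.algHom_ext
    intro i
    simp [hσ, map_add, map_sum, map_mul]
  rw [hcomp]
  exact hv.comp hσinj



lemma indep_inv {K F : Type*} [Field K] [Field F] [Algebra K F] {n : ℕ}
    {v : Fin n → F} (hv : AlgebraicIndependent K v) (h0 : ∀ i, v i ≠ 0) :
    AlgebraicIndependent K (fun i => (v i)⁻¹) := by
  classical
  rw [algebraicIndependent_iff] at hv ⊢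
  intro p hp
  by_contra hpne
  set d : Fin n →₀ ℕ := p.support.sup id with hd
  have hmd : ∀ m ∈ p.support, m ≤ d := fun m hm => Finset.le_sup (f := id) hm
  set q : MvPolynomial (Fin n) K := ∑ m ∈ p.support, monomial (d - m) (coeff m p) with hq
  have expand : aeval v q
      = ∑ m ∈ p.support, algebraMap K F (coeff m p) * ∏ i, v i ^ (d i - m i) := by
    rw [hq, map_sum]
    refine Finset.sum_congr rfl fun m _ => ?_
    rw [aeval_monomial, Finsupp.prod_fintype _ _ (fun i => pow_zero _)]
    exact congrArg _ (Finset.prod_congr rfl fun i _ => by rw [Finsupp.tsub_apply])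
  have expand2 : aeval (fun i => (v i)⁻¹) p
      = ∑ m ∈ p.support, algebraMap K F (coeff m p) * ∏ i, (v i ^ (m i))⁻¹ := by
    rw [aeval_def, eval₂_eq']
    exact Finset.sum_congr rfl fun m _ =>
      congrArg _ (Finset.prod_congr rfl fun i _ => by rw [inv_pow])
  have key : aeval v q = (∏ i, v i ^ d i) * aeval (fun i => (v i)⁻¹) p := by
    rw [expand, expand2, Finset.mul_sum]
    refine Finset.sum_congr rfl fun m hm => ?_
    have hle : ∀ i, m i ≤ d i := fun i => hmd m hm i
    rw [mul_left_comm, ← Finset.prod_mul_distrib]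
    exact congrArg _ (Finset.prod_congr rfl fun i _ => (pow_sub₀ _ (h0 i) (hle i)))
  have hq0 : q = 0 := hv q (by rw [key, hp, mul_zero])
  obtain ⟨m₀, hm₀⟩ : p.support.Nonempty := Finset.nonempty_iff_ne_empty.2 (mt MvPolynomial.support_eq_empty.1 hpne)
  have hinj : ∀ m ∈ p.support, d - m = d - m₀ → m = m₀ := by
    intro m hm h
    ext i
    have h1 : d i - m i = d i - m₀ i := by
      rw [← Finsupp.tsub_apply, ← Finsupp.tsub_apply, h]
    have := hmd m hm i
    have := hmd m₀ hm₀ i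
    omega
  have : coeff (d - m₀) q = coeff m₀ p := by
    rw [hq, MvPolynomial.coeff_sum]
    rw [Finset.sum_eq_single m₀]
    · simp
    · intro m hm hne
      rw [coeff_monomial, if_neg (fun h => hne (hinj m hm h))]
    · intro h
      exact absurd hm₀ h
  rw [hq0] at this
  simp only [coeff_zero] at this
  exact (Finsupp.mem_support_iff.1 hm₀) this.symm


open Finset in

lemma prod_expand {K : Type*} [CommRing K] {n : ℕ} (b : K) :
    (∏ k : Fin n, (1 - C b * X k) : MvPolynomial (Fin n) K)
      = 1 + ∑ m : Fin n, C ((-b) ^ ((m : ℕ) + 1)) * esymm (Fin n) K ((m : ℕ) + 1) := by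
  classical
  have h1 : ∀ k : Fin n, (1 - C b * X k : MvPolynomial (Fin n) K) = (-C b) * X k + 1 := by
    intro k; ring
  rw [Finset.prod_congr rfl fun k _ => h1 k, Finset.prod_add]
  have h2 : ∀ t ∈ (Finset.univ : Finset (Fin n)).powerset,
      ((∏ k ∈ t, (-C b) * X k) * ∏ k ∈ Finset.univ \ t, (1 : MvPolynomial (Fin n) K))
        = (-C b) ^ t.card * ∏ k ∈ t, X k := by
    intro t _
    rw [Finset.prod_const_one, mul_one, Finset.prod_mul_distrib, Finset.prod_const]
  rw [Finset.sum_congr rfl h2]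
  have hmaps : ∀ t ∈ (Finset.univ : Finset (Fin n)).powerset,
      t.card ∈ Finset.range (n + 1) := by
    intro t _
    rw [Finset.mem_range, Nat.lt_succ_iff]
    simpa using Finset.card_le_univ t
  rw [← Finset.sum_fiberwise_of_maps_to hmaps]
  have h3 : ∀ j ∈ Finset.range (n + 1),
      (∑ t ∈ (Finset.univ : Finset (Fin n)).powerset with t.card = j,
        (-C b) ^ t.card * ∏ k ∈ t, X k)
      = (-C b : MvPolynomial (Fin n) K) ^ j * esymm (Fin n) K j := by
    intro j _
    rw [esymm, Finset.mul_sum, Finset.powersetCard_eq_filter]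
    refine Finset.sum_congr rfl fun t ht => ?_
    rw [(Finset.mem_filter.1 ht).2]
  rw [Finset.sum_congr rfl h3, Finset.sum_range_succ']
  simp only [pow_zero, one_mul, esymm_zero]
  rw [add_comm, ← Fin.sum_univ_eq_sum_range (fun j => (-C b : MvPolynomial (Fin n) K) ^ (j + 1) * esymm (Fin n) K (j + 1))]
  congr 1
  refine Finset.sum_congr rfl fun m _ => ?_
  rw [map_pow, map_neg]


set_option maxHeartbeats 1000000 in
set_option synthInstance.maxHeartbeats 400000 in
open MvPolynomial in
/-- the elements `Ω_i = ∏_{k=1}^n (1 - b_i y_k)⁻¹ ∈ F`, `1 ≤ i ≤ n`, are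
algebraically independent over `K`. -/
theorem stmt3 (n : ℕ) (hn : 2 ≤ n) :
    AlgebraicIndependent (KK n)
      (fun i : Fin n => (∏ k : Fin n, (1 - bF n i * yF n k))⁻¹) := by
  classical
  set A := MvPolynomial (Fin n) (KK n) with hA
  set bK : Fin n → KK n := fun i => algebraMap (RT n) (KK n) (bb n i) with hbK
  -- basic facts about bb
  have hbbinj : Function.Injective (fun i : Fin n => bb n i) := by
    intro i j h
    simp only [bb, eexp, sub_right_inj] at h
    have h2 := AddMonoidAlgebra.single_inj.1 h
    rcases h2 with ⟨h3, -⟩ | ⟨h3, -⟩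
    · have h4 : (Finsupp.single i 1 : Fin n →₀ ℤ) = Finsupp.single j 1 := by
        rw [← neg_neg (Finsupp.single i 1), h3, neg_neg]
      rcases (Finsupp.single_eq_single_iff _ _ _ _).1 h4 with ⟨h5, -⟩ | ⟨h5, -⟩
      · exact h5
      · exact absurd h5 one_ne_zero
    · exact absurd h3 one_ne_zero
  have hbb0 : ∀ i, bb n i ≠ 0 := by
    intro i h
    have h1 : eexp n (-(Finsupp.single i 1)) = 1 := by
      have := sub_eq_zero.1 h
      exact this.symm
    rw [eexp] at h1
    have h2 : (AddMonoidAlgebra.single (-(Finsupp.single i 1)) 1 : RT n)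
        = AddMonoidAlgebra.single 0 1 := by
      rw [h1]; rfl
    rcases AddMonoidAlgebra.single_inj.1 h2 with ⟨h3, -⟩ | ⟨h3, -⟩
    · have h4 : (Finsupp.single i 1 : Fin n →₀ ℤ) = 0 := by
        rw [← neg_neg (Finsupp.single i 1), h3, neg_zero]
      exact one_ne_zero (Finsupp.single_eq_zero.1 h4)
    · exact one_ne_zero h3
  have hKinj : Function.Injective (algebraMap (RT n) (KK n)) := IsFractionRing.injective _ _
  have hbne : ∀ i j, i ≠ j → bK i ≠ bK j := fun i j hij h =>
    hij (hbbinj (hKinj h))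
  have hb0 : ∀ i, bK i ≠ 0 := fun i h =>
    hbb0 i (hKinj (by rw [map_zero]; exact h))
  -- esymm independence in A, pushed to FF n
  have hes0 : AlgebraicIndependent (KK n)
      (fun m : Fin n => esymm (Fin n) (KK n) ((m : ℕ) + 1)) := by
    rw [algebraicIndependent_iff_injective_aeval]
    have h := MvPolynomial.esymmAlgHom_injective (σ := Fin n) (KK n) (n := n) (by simp)
    intro p q hpq
    apply h
    ext1
    rw [esymmAlgHom_apply, esymmAlgHom_apply]
    exact hpq
  have hAFinj : Function.Injective (algebraMap A (FF n)) := IsFractionRing.injective _ _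
  have hes : AlgebraicIndependent (KK n)
      (fun m : Fin n => algebraMap A (FF n) (esymm (Fin n) (KK n) ((m : ℕ) + 1))) :=
    hes0.map' (f := IsScalarTower.toAlgHom (KK n) A (FF n)) hAFinj
  -- the matrix
  set V : Matrix (Fin n) (Fin n) (KK n) := Matrix.of fun i m => (-bK i) ^ ((m : ℕ) + 1) with hV
  have hdet : IsUnit V.det := by
    have hVfact : V = Matrix.diagonal (fun i => -bK i) * Matrix.vandermonde (fun i => -bK i) := by
      ext i j
      rw [Matrix.diagonal_mul, Matrix.vandermonde_apply, hV, Matrix.of_apply, pow_succ']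
    rw [hVfact, Matrix.det_mul, Matrix.det_diagonal, Matrix.det_vandermonde, isUnit_iff_ne_zero]
    refine mul_ne_zero ?_ ?_
    · exact Finset.prod_ne_zero_iff.2 fun i _ => neg_ne_zero.2 (hb0 i)
    · refine Finset.prod_ne_zero_iff.2 fun i _ => Finset.prod_ne_zero_iff.2 fun j hj => ?_
      have hlt := Finset.mem_Ioi.1 hj
      exact sub_ne_zero.2 fun h => hbne j i (ne_of_gt hlt) (neg_injective h)
  have haff := indep_affine hes V hdet (fun _ => (1 : KK n))
  have e1 : ∀ (i k : Fin n), (1 - bF n i * yF n k)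
      = algebraMap A (FF n) (1 - C (bK i) * X k) := by
    intro i k
    rw [map_sub, map_one, map_mul, bF, yF]
    rw [IsScalarTower.algebraMap_apply (KK n) A (FF n), MvPolynomial.algebraMap_eq]
  have e2 : ∀ i, (∏ k : Fin n, (1 - bF n i * yF n k))
      = algebraMap A (FF n) (∏ k : Fin n, (1 - C (bK i) * X k)) := by
    intro i; rw [map_prod]; exact Finset.prod_congr rfl fun k _ => e1 i k
  have e3 : ∀ i, (∏ k : Fin n, (1 - bF n i * yF n k))
      = algebraMap (KK n) (FF n) 1 + ∑ m, algebraMap (KK n) (FF n) (V i m)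
          * algebraMap A (FF n) (esymm (Fin n) (KK n) ((m : ℕ) + 1)) := by
    intro i
    rw [e2, prod_expand (bK i), map_add, map_one, map_sum, map_one]
    congr 1
    refine Finset.sum_congr rfl fun m _ => ?_
    rw [map_mul]
    congr 1
  have hW : AlgebraicIndependent (KK n)
      (fun i : Fin n => ∏ k : Fin n, (1 - bF n i * yF n k)) := by
    rw [show (fun i : Fin n => ∏ k : Fin n, (1 - bF n i * yF n k))
        = (fun i : Fin n => algebraMap (KK n) (FF n) 1 + ∑ m, algebraMap (KK n) (FF n) (V i m)
            * algebraMap A (FF n) (esymm (Fin n) (KK n) ((m : ℕ) + 1))) from funext e3]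
    exact haff
  have hnz : ∀ i, (∏ k : Fin n, (1 - bF n i * yF n k)) ≠ 0 := by
    intro i
    rw [e2 i]
    intro h
    have hp0 : (∏ k : Fin n, (1 - C (bK i) * X k) : A) = 0 := hAFinj (by rw [h, map_zero])
    have h5 := congrArg (MvPolynomial.eval (fun _ : Fin n => (0 : KK n))) hp0
    simp only [map_prod, map_sub, map_one, map_mul, eval_C, eval_X, mul_zero, sub_zero,
      Finset.prod_const_one, map_zero] at h5
    exact one_ne_zero h5
  exact indep_inv hW hnz
end
end

section
/- In the polynomial ring ℤ[b_1,…,b_n, y_1,…,y_n], the determinant of the n×n matrix M whose (i,j) entry is M_{ij} = ∏_{k ≠ j, 1 ≤ k ≤ n} (1 − b_i·y_k) equals ∏_{1 ≤ i < j ≤ n} (b_i − b_j)(y_i − y_j). -/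
noncomputable section

/-- The variable `b_i` in `ℤ[b_1,…,b_n,y_1,…,y_n]`. -/
def Bv (n : ℕ) (i : Fin n) : MvPolynomial (Fin n ⊕ Fin n) ℤ := MvPolynomial.X (Sum.inl i)

/-- The variable `y_j` in `ℤ[b_1,…,b_n,y_1,…,y_n]`. -/
def Yv (n : ℕ) (j : Fin n) : MvPolynomial (Fin n ⊕ Fin n) ℤ := MvPolynomial.X (Sum.inr j)

/-- Expansion of `∏ (x + c * v k)` into elementary symmetric pieces. -/
lemma expand_aux {R : Type*} [CommRing R] {ι : Type*} [DecidableEq ι] (s : Finset ι)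
    (x c : R) (v : ι → R) :
    ∏ k ∈ s, (x + c * v k)
      = ∑ m ∈ Finset.range (s.card + 1),
          c ^ m * (∑ t ∈ Finset.powersetCard m s, ∏ k ∈ t, v k) * x ^ (s.card - m) := by
  have h : ∀ k ∈ s, x + c * v k = c * v k + x := fun _ _ => add_comm _ _
  rw [Finset.prod_congr rfl h, Finset.prod_add, Finset.powerset_card_disjiUnion]
  refine (Finset.sum_disjiUnion _ _ _).trans ?_
  refine Finset.sum_congr rfl fun m _ => ?_
  rw [Finset.mul_sum, Finset.sum_mul]
  refine Finset.sum_congr rfl fun t ht => ?_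
  obtain ⟨hts, htc⟩ := Finset.mem_powersetCard.mp ht
  rw [Finset.prod_const, Finset.card_sdiff_of_subset hts, Finset.prod_mul_distrib,
    Finset.prod_const, htc]

/-- The `i < j` pair product equals the iterated `Ioi` product. -/
lemma pairProd_aux {n : ℕ} {M : Type*} [CommMonoid M] (f : Fin n → Fin n → M) :
    ∏ p ∈ Finset.univ.filter (fun p : Fin n × Fin n => p.1 < p.2), f p.1 p.2
      = ∏ i, ∏ j ∈ Finset.Ioi i, f i j := by
  rw [Finset.prod_sigma' Finset.univ (fun i => Finset.Ioi i) f]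
  refine (Finset.prod_nbij' (fun p : Fin n × Fin n => (⟨p.1, p.2⟩ : Σ _ : Fin n, Fin n))
    (fun x => (x.1, x.2)) ?_ ?_ ?_ ?_ ?_).symm.symm
  all_goals simp [Finset.mem_sigma]

/-- The `i < j` pair product equals the iterated `Iio` product. -/
lemma pairProd_aux2 {n : ℕ} {M : Type*} [CommMonoid M] (f : Fin n → Fin n → M) :
    ∏ p ∈ Finset.univ.filter (fun p : Fin n × Fin n => p.1 < p.2), f p.1 p.2
      = ∏ j, ∏ i ∈ Finset.Iio j, f i j := by
  rw [Finset.prod_sigma' Finset.univ (fun j => Finset.Iio j) (fun j i => f i j)]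
  refine Finset.prod_nbij' (fun p : Fin n × Fin n => (⟨p.2, p.1⟩ : Σ _ : Fin n, Fin n))
    (fun x => (x.2, x.1)) ?_ ?_ ?_ ?_ ?_
  all_goals simp [Finset.mem_sigma]

/-- Reindexing the pair product by `p ↦ (p.2.rev, p.1.rev)`. -/
lemma revPairProd_aux {n : ℕ} {M : Type*} [CommMonoid M] (f : Fin n → Fin n → M) :
    ∏ p ∈ Finset.univ.filter (fun p : Fin n × Fin n => p.1 < p.2), f p.2.rev p.1.rev
      = ∏ p ∈ Finset.univ.filter (fun p : Fin n × Fin n => p.1 < p.2), f p.1 p.2 := by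
  refine Finset.prod_nbij' (fun p : Fin n × Fin n => (p.2.rev, p.1.rev))
    (fun p : Fin n × Fin n => (p.2.rev, p.1.rev)) ?_ ?_ ?_ ?_ ?_
  all_goals simp [Fin.rev_lt_rev]

/-- in `ℤ[b_1,…,b_n,y_1,…,y_n]`,
`det (∏_{k ≠ j} (1 - b_i y_k))_{ij} = ∏_{i<j} (b_i - b_j)(y_i - y_j)`. -/
theorem stmt4 (n : ℕ) (hn : 1 ≤ n) :
    Matrix.det (Matrix.of fun i j : Fin n =>
        ∏ k ∈ Finset.univ.erase j, (1 - Bv n i * Yv n k))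
      = ∏ p ∈ Finset.univ.filter (fun p : Fin n × Fin n => p.1 < p.2),
          ((Bv n p.1 - Bv n p.2) * (Yv n p.1 - Yv n p.2)) := by
  classical
  set R := MvPolynomial (Fin n ⊕ Fin n) ℤ with hRdef
  set b : Fin n → R := Bv n with hb
  set y : Fin n → R := Yv n with hy
  have hcard : ∀ j : Fin n, (Finset.univ.erase j).card = n - 1 := by
    intro j
    rw [Finset.card_erase_of_mem (Finset.mem_univ j), Finset.card_univ, Fintype.card_fin]
  have hn1 : n - 1 + 1 = n := Nat.succ_pred_eq_of_pos hn
  -- matrices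
  set M : Matrix (Fin n) (Fin n) R :=
    Matrix.of (fun i j : Fin n => ∏ k ∈ Finset.univ.erase j, (1 - b i * y k)) with hM
  set E : Matrix (Fin n) (Fin n) R :=
    Matrix.of (fun m j : Fin n =>
      ∑ t ∈ Finset.powersetCard (m : ℕ) (Finset.univ.erase j), ∏ k ∈ t, y k) with hE
  set V : Matrix (Fin n) (Fin n) R :=
    Matrix.of (fun i m : Fin n => (-(b i)) ^ (m : ℕ)) with hV
  set T : Matrix (Fin n) (Fin n) R :=
    Matrix.of (fun m l : Fin n => (-(y l)) ^ (n - 1 - (m : ℕ))) with hT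
  set D : Matrix (Fin n) (Fin n) R :=
    Matrix.diagonal (fun j : Fin n => ∏ k ∈ Finset.univ.erase j, (y k - y j)) with hD
  -- M = V * E
  have hME : M = V * E := by
    refine Matrix.ext fun i j => ?_
    have h1 : ∀ k ∈ Finset.univ.erase j, (1 : R) - b i * y k = 1 + (-(b i)) * y k :=
      fun k _ => by ring
    have lhs : M i j = ∑ m ∈ Finset.range n, (-(b i)) ^ m *
        (∑ t ∈ Finset.powersetCard m (Finset.univ.erase j), ∏ k ∈ t, y k)
          * (1 : R) ^ (n - 1 - m) := by
      show (∏ k ∈ Finset.univ.erase j, ((1 : R) - b i * y k)) = _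
      rw [Finset.prod_congr rfl h1, expand_aux, hcard j, hn1]
    rw [lhs, Matrix.mul_apply, ← Fin.sum_univ_eq_sum_range (fun m => (-(b i)) ^ m *
        (∑ t ∈ Finset.powersetCard m (Finset.univ.erase j), ∏ k ∈ t, y k)
          * (1 : R) ^ (n - 1 - m)) n]
    exact Finset.sum_congr rfl fun m _ => by rw [one_pow, mul_one]; rfl
  -- Eᵀ * T = D
  have hETD : E.transpose * T = D := by
    refine Matrix.ext fun j l => ?_
    have h1 : ∀ k ∈ Finset.univ.erase j, (y k - y l : R) = -(y l) + 1 * y k :=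
      fun k _ => by ring
    have lhs : (E.transpose * T) j l
        = ∏ k ∈ Finset.univ.erase j, (y k - y l) := by
      rw [Matrix.mul_apply]
      rw [Finset.prod_congr rfl h1, expand_aux, hcard j, hn1,
        ← Fin.sum_univ_eq_sum_range (fun m => (1 : R) ^ m *
          (∑ t ∈ Finset.powersetCard m (Finset.univ.erase j), ∏ k ∈ t, y k)
            * (-(y l)) ^ (n - 1 - m)) n]
      exact Finset.sum_congr rfl fun m _ => by rw [one_pow, one_mul]; rfl
    rw [lhs]
    by_cases hjl : j = l
    · subst hjl
      simp [hD, Matrix.diagonal_apply_eq]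
    · have hl : l ∈ Finset.univ.erase j := Finset.mem_erase.mpr ⟨Ne.symm hjl, Finset.mem_univ l⟩
      rw [Finset.prod_eq_zero hl (by rw [sub_self]), hD, Matrix.diagonal_apply_ne _ hjl]
  -- determinants of the Vandermonde pieces
  have hdetV : V.det = ∏ i, ∏ j ∈ Finset.Ioi i, (b i - b j) := by
    have hVv : V = Matrix.vandermonde (fun i => -(b i)) := by
      refine Matrix.ext fun i m => rfl
    rw [hVv, Matrix.det_vandermonde]
    exact Finset.prod_congr rfl fun i _ => Finset.prod_congr rfl fun j _ => by ring
  -- A = transpose of vandermonde(-y) ; T = A with rows permuted by rev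
  set A : Matrix (Fin n) (Fin n) R := (Matrix.vandermonde (fun l => -(y l))).transpose with hA
  have hTA : T = A.submatrix Fin.rev id := by
    refine Matrix.ext fun m l => ?_
    show (-(y l)) ^ (n - 1 - (m : ℕ)) = (-(y l)) ^ ((Fin.rev m : ℕ))
    rw [Fin.val_rev, Nat.sub_sub, Nat.add_comm 1 (m : ℕ)]
  set Pm : R := ∏ i, ∏ j ∈ Finset.Ioi i, (y i - y j) with hPm
  set Pp : R := ∏ i, ∏ j ∈ Finset.Ioi i, (y j - y i) with hPp
  have hdetA : A.det = Pm := by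
    rw [hA, Matrix.det_transpose, Matrix.det_vandermonde, hPm]
    exact Finset.prod_congr rfl fun i _ => Finset.prod_congr rfl fun j _ => by ring
  set s : R := ((Equiv.Perm.sign (Fin.revPerm : Equiv.Perm (Fin n)) : ℤ) : R) with hs
  have hdetT : T.det = s * Pm := by
    rw [hTA]
    have h0 : A.submatrix Fin.rev id = A.submatrix (Fin.revPerm : Equiv.Perm (Fin n)) id := rfl
    rw [h0, Matrix.det_permute, hdetA, hs]
  -- the sign identity : s * Pm = Pp
  have hsign : s * Pm = Pp := by
    have hperm : Matrix.vandermonde (fun i => -(y (Fin.rev i)))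
        = (Matrix.vandermonde (fun l => -(y l))).submatrix
            (Fin.revPerm : Equiv.Perm (Fin n)) id :=
      Matrix.ext fun i j => rfl
    have h1 : (Matrix.vandermonde (fun i => -(y (Fin.rev i)))).det = s * Pm := by
      rw [hperm, Matrix.det_permute, hs]
      have : (Matrix.vandermonde (fun l => -(y l))).det = Pm := by
        rw [← hdetA, hA, Matrix.det_transpose]
      rw [this]
    have h2 : (Matrix.vandermonde (fun i => -(y (Fin.rev i)))).det = Pp := by
      rw [Matrix.det_vandermonde]
      have heq : ∀ i : Fin n, ∀ j ∈ Finset.Ioi i, -(y (Fin.rev j)) - -(y (Fin.rev i))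
          = y (Fin.rev i) - y (Fin.rev j) := fun _ _ _ => by ring
      rw [Finset.prod_congr rfl fun i _ => Finset.prod_congr rfl (heq i), hPp,
        ← pairProd_aux (fun i j => y (Fin.rev i) - y (Fin.rev j)),
        ← pairProd_aux (fun i j => y j - y i)]
      exact revPairProd_aux (fun a c => y c - y a)
    rw [← h1, h2]
  -- Pp ≠ 0
  have hPp0 : Pp ≠ 0 := by
    have hPpv : Pp = (Matrix.vandermonde y).det := (Matrix.det_vandermonde y).symm
    rw [hPpv, Ne, Matrix.det_vandermonde_eq_zero_iff]
    rintro ⟨i, j, hyij, hij⟩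
    simp only [hy, Yv] at hyij
    exact hij (Sum.inr_injective (MvPolynomial.X_injective hyij))
  -- d-product
  have herase : ∀ j : Fin n, Finset.univ.erase j = Finset.Iio j ∪ Finset.Ioi j := by
    intro j
    ext k
    simp only [Finset.mem_erase, Finset.mem_univ, and_true, Finset.mem_union,
      Finset.mem_Iio, Finset.mem_Ioi]
    exact ne_iff_lt_or_gt
  have hdisj : ∀ j : Fin n, Disjoint (Finset.Iio j) (Finset.Ioi j) := by
    intro j
    rw [Finset.disjoint_left]
    intro k hk hk'
    exact absurd (Finset.mem_Ioi.mp hk') (not_lt.mpr (le_of_lt (Finset.mem_Iio.mp hk)))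
  have hd : (∏ j, ∏ k ∈ Finset.univ.erase j, (y k - y j)) = Pm * Pp := by
    calc (∏ j, ∏ k ∈ Finset.univ.erase j, (y k - y j))
        = ∏ j, ((∏ k ∈ Finset.Iio j, (y k - y j)) * ∏ k ∈ Finset.Ioi j, (y k - y j)) :=
          Finset.prod_congr rfl fun j _ => by rw [herase j, Finset.prod_union (hdisj j)]
      _ = (∏ j, ∏ k ∈ Finset.Iio j, (y k - y j)) * ∏ j, ∏ k ∈ Finset.Ioi j, (y k - y j) :=
          Finset.prod_mul_distrib
      _ = Pm * Pp := by
          rw [← pairProd_aux2 (fun a c => y a - y c), pairProd_aux (fun a c => y a - y c),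
            hPm, hPp]
  -- assemble
  have hdetM : M.det * T.det = V.det * (Pm * Pp) := by
    rw [hME, Matrix.det_mul, mul_assoc, ← Matrix.det_transpose E, ← Matrix.det_mul, hETD, hD,
      Matrix.det_diagonal, hd]
  rw [hdetT, hsign] at hdetM
  -- cancel Pp
  have hcancel : M.det = V.det * Pm := by
    refine mul_right_cancel₀ hPp0 ?_
    calc M.det * Pp = V.det * (Pm * Pp) := hdetM
    _ = V.det * Pm * Pp := by ring
  have hfin : Matrix.det (Matrix.of fun i j : Fin n =>
      ∏ k ∈ Finset.univ.erase j, (1 - Bv n i * Yv n k)) = M.det := rfl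
  rw [hfin, hcancel, hdetV]
  rw [Finset.prod_mul_distrib, pairProd_aux (fun i j => b i - b j),
    pairProd_aux (fun i j => y i - y j)]
end
end

section
/- Let w ∈ W̃_n be affine Grassmannian and let γ ∈ ℤⁿ be antidominant. Then w ∘ t_γ is affine Grassmannian and ℓ(w ∘ t_γ) = ℓ(w) + ℓ(t_γ), where ℓ(t_γ) = Σ_{1 ≤ i < j ≤ n} (γ_j − γ_i). -/
noncomputable section

/-- The 0-based residue of `m` modulo `n`, corresponding to the 1-based representative
`i ∈ {1,…,n}` with `m ≡ i (mod n)`: `resid n m = i - 1`. -/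
def resid (n : ℕ) [NeZero n] (m : ℤ) : Fin n :=
  ⟨((m - 1) % (n : ℤ)).toNat, by
    have hn : 0 < (n : ℤ) := by exact_mod_cast Nat.pos_of_ne_zero (NeZero.ne n)
    have h1 : 0 ≤ (m - 1) % (n : ℤ) := Int.emod_nonneg _ (by omega)
    have h2 : (m - 1) % (n : ℤ) < n := Int.emod_lt_of_pos _ hn
    omega⟩

/-- The translation element `t_λ : ℤ → ℤ`, `t_λ(i + kn) = i + (λ_i + k)n` for `1 ≤ i ≤ n`. -/
def tFun (n : ℕ) [NeZero n] (lam : Fin n → ℤ) : ℤ → ℤ :=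
  fun m => m + n * lam (resid n m)

/-- The lift `ū : ℤ → ℤ` of a permutation `u` of `{1,…,n}` (0-based: of `Fin n`),
`ū(i + kn) = u(i) + kn` for `1 ≤ i ≤ n`. -/
def ubarFun (n : ℕ) [NeZero n] (u : Equiv.Perm (Fin n)) : ℤ → ℤ :=
  fun m => ((u (resid n m) : ℕ) + 1 : ℤ) + n * ((m - 1) / n)

/-- Membership in the group `W̃_n` of affine permutations: `w : ℤ → ℤ` is a bijection
with `w(i + n) = w(i) + n`. -/
def IsAffPerm (n : ℕ) (w : ℤ → ℤ) : Prop :=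
  Function.Bijective w ∧ ∀ i : ℤ, w (i + n) = w i + n

/-- The length `ℓ(w) = #{(i,j) : 1 ≤ i ≤ n, j ∈ ℤ, i < j, w(i) > w(j)}`. -/
def lenAff (n : ℕ) (w : ℤ → ℤ) : ℕ :=
  Set.ncard {p : ℤ × ℤ | 1 ≤ p.1 ∧ p.1 ≤ n ∧ p.1 < p.2 ∧ w p.2 < w p.1}

/-- `w` is affine Grassmannian: `w(1) < w(2) < ⋯ < w(n)`. -/
def IsAffGr (n : ℕ) (w : ℤ → ℤ) : Prop :=
  ∀ i : ℤ, 1 ≤ i → i < n → w i < w (i + 1)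

/-- The sum `Σ_{1 ≤ i < j ≤ n} (λ_j - λ_i)`. -/
def pairSum (n : ℕ) (lam : Fin n → ℤ) : ℤ :=
  ∑ p ∈ Finset.univ.filter (fun p : Fin n × Fin n => p.1 < p.2), (lam p.2 - lam p.1)

/-- The number of inversions `#{(i,j) : 1 ≤ i < j ≤ n, u(i) > u(j)}` of `u`. -/
def invCount (n : ℕ) (u : Equiv.Perm (Fin n)) : ℕ :=
  (Finset.univ.filter (fun p : Fin n × Fin n => p.1 < p.2 ∧ u p.2 < u p.1)).card

-- auxiliary lemmas

lemma npos (n : ℕ) [NeZero n] : 0 < (n : ℤ) := by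
  exact_mod_cast Nat.pos_of_ne_zero (NeZero.ne n)

lemma wAdd' (n : ℕ) (w : ℤ → ℤ) (hp : ∀ i : ℤ, w (i + n) = w i + n) :
    ∀ (k m : ℤ), w (m + k * n) = w m + k * n := by
  intro k
  induction k using Int.induction_on with
  | zero => simp
  | succ i ih =>
    intro m
    have h1 : m + ((i : ℤ) + 1) * n = (m + i * n) + n := by ring
    rw [h1, hp, ih]; ring
  | pred i ih =>
    intro m
    have h1 : m + (-(i : ℤ) - 1) * n = (m + (-(i : ℤ)) * n) - n := by ring
    have h2 : w ((m + (-(i : ℤ)) * n) - n) = w (m + (-(i : ℤ)) * n) - n := by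
      have := hp ((m + (-(i : ℤ)) * n) - n)
      rw [sub_add_cancel] at this
      omega
    rw [h1, h2, ih]; ring

lemma grChain (n : ℕ) (w : ℤ → ℤ) (hgr : IsAffGr n w) :
    ∀ b a : ℤ, 1 ≤ a → a < b → b ≤ n → w a < w b := by
  intro b
  induction b using Int.induction_on with
  | zero => intro a h1 h2 h3; omega
  | succ m ih =>
    intro a h1 h2 h3
    rcases eq_or_lt_of_le (show a ≤ (m : ℤ) by omega) with h | h
    · rw [← h]
      exact hgr a h1 (by omega)
    · calc w a < w m := ih a h1 h (by omega)
        _ < w ((m : ℤ) + 1) := hgr m (by omega) (by omega)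
  | pred m ih => intro a h1 h2 h3; omega

lemma resid_val (n : ℕ) [NeZero n] (m : ℤ) (h1 : 1 ≤ m) (h2 : m ≤ n) :
    ((resid n m : ℕ) : ℤ) = m - 1 := by
  have hn : 0 < (n : ℤ) := npos n
  have h : (m - 1) % (n : ℤ) = m - 1 := Int.emod_eq_of_lt (by omega) (by omega)
  show (((m - 1) % (n : ℤ)).toNat : ℤ) = m - 1
  rw [h]
  omega

lemma resid_coe (n : ℕ) [NeZero n] (a : Fin n) : resid n (((a : ℕ) : ℤ) + 1) = a := by
  have h2 : ((a : ℕ) : ℤ) + 1 ≤ n := by exact_mod_cast a.2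
  have h := resid_val n (((a : ℕ) : ℤ) + 1) (by omega) h2
  apply Fin.ext
  omega

lemma resid_add_n (n : ℕ) [NeZero n] (m : ℤ) : resid n (m + n) = resid n m := by
  apply Fin.ext
  show ((m + (n:ℤ) - 1) % (n : ℤ)).toNat = ((m - 1) % (n : ℤ)).toNat
  have h : m + (n:ℤ) - 1 = (m - 1) + (n:ℤ) * 1 := by ring
  rw [h, Int.add_mul_emod_self_left]

lemma lenAff_eq_sum (n : ℕ) [NeZero n] (w : ℤ → ℤ) (hp : ∀ i : ℤ, w (i + n) = w i + n) :
    lenAff n w = ∑ q : Fin n × Fin n,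
      ((w (((q.1 : ℕ) : ℤ) + 1) - w (((q.2 : ℕ) : ℤ) + 1) - 1) / (n : ℤ)
        - (((q.1 : ℕ) : ℤ) - ((q.2 : ℕ) : ℤ)) / (n : ℤ)).toNat := by
  have hn : 0 < (n : ℤ) := npos n
  have hnz : (n : ℤ) ≠ 0 := ne_of_gt hn
  have wAdd : ∀ (k m : ℤ), w (m + k * n) = w m + k * n := wAdd' n w hp
  set F : Finset (ℤ × ℤ) := Finset.univ.biUnion (fun q : Fin n × Fin n =>
    (Finset.Icc ((((q.1 : ℕ) : ℤ) - ((q.2 : ℕ) : ℤ)) / (n : ℤ) + 1)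
        ((w (((q.1 : ℕ) : ℤ) + 1) - w (((q.2 : ℕ) : ℤ) + 1) - 1) / (n : ℤ))).image
      (fun k => ((((q.1 : ℕ) : ℤ) + 1, ((q.2 : ℕ) : ℤ) + 1 + k * (n : ℤ))))) with hF
  have hset : {p : ℤ × ℤ | 1 ≤ p.1 ∧ p.1 ≤ n ∧ p.1 < p.2 ∧ w p.2 < w p.1} = (F : Set (ℤ × ℤ)) := by
    ext ⟨i, j⟩
    simp only [Set.mem_setOf_eq]
    constructor
    · rintro ⟨h1, h2, h3, h4⟩
      have hai : (i - 1).toNat < n := by omega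
      have hb0 : 0 ≤ (j - 1) % (n : ℤ) := Int.emod_nonneg _ (by omega)
      have hb1 : (j - 1) % (n : ℤ) < n := Int.emod_lt_of_pos _ hn
      have hbi : ((j - 1) % (n : ℤ)).toNat < n := by omega
      have hj : j = (((j - 1) % (n : ℤ)).toNat : ℤ) + 1 + ((j - 1) / (n : ℤ)) * (n : ℤ) := by
        have hde := Int.mul_ediv_add_emod (j - 1) (n : ℤ)
        have hcm := mul_comm (n : ℤ) ((j - 1) / (n : ℤ))
        have ht : ((((j - 1) % (n : ℤ)).toNat : ℤ)) = (j - 1) % (n : ℤ) := by omega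
        rw [ht]
        linarith
      refine Finset.mem_coe.mpr (Finset.mem_biUnion.mpr
        ⟨(⟨(i - 1).toNat, hai⟩, ⟨((j - 1) % (n : ℤ)).toNat, hbi⟩), Finset.mem_univ _,
          Finset.mem_image.mpr ⟨(j - 1) / (n : ℤ), Finset.mem_Icc.mpr ⟨?_, ?_⟩, ?_⟩⟩)
      · show (((i - 1).toNat : ℤ) - (((j - 1) % (n : ℤ)).toNat : ℤ)) / (n : ℤ) + 1 ≤ (j - 1) / (n : ℤ)
        refine Int.add_one_le_iff.mpr ((Int.ediv_lt_iff_lt_mul hn).mpr ?_)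
        have h5 : (((i - 1).toNat : ℤ)) = i - 1 := by omega
        have h6 : ((((j - 1) % (n : ℤ)).toNat : ℤ)) = (j - 1) % (n : ℤ) := by omega
        rw [h5, h6]
        linarith [hj, (by omega : ((((j - 1) % (n : ℤ)).toNat : ℤ)) = (j - 1) % (n : ℤ))]
      · show (j - 1) / (n : ℤ) ≤ (w (((i - 1).toNat : ℤ) + 1) - w ((((j - 1) % (n : ℤ)).toNat : ℤ) + 1) - 1) / (n : ℤ)
        refine (Int.le_ediv_iff_mul_le hn).mpr ?_
        have h5 : (((i - 1).toNat : ℤ)) + 1 = i := by omega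
        have hwj : w j = w ((((j - 1) % (n : ℤ)).toNat : ℤ) + 1) + ((j - 1) / (n : ℤ)) * (n : ℤ) := by
          conv_lhs => rw [hj]
          exact wAdd _ _
        rw [h5]
        linarith
      · show ((((i - 1).toNat : ℤ) + 1 : ℤ), ((((j - 1) % (n : ℤ)).toNat : ℤ) + 1 + ((j - 1) / (n : ℤ)) * (n : ℤ) : ℤ)) = (i, j)
        have h5 : (((i - 1).toNat : ℤ)) + 1 = i := by omega
        rw [Prod.mk.injEq]
        exact ⟨h5, hj.symm⟩
    · intro hp'
      rw [Finset.mem_coe, Finset.mem_biUnion] at hp'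
      obtain ⟨q, -, hq⟩ := hp'
      rw [Finset.mem_image] at hq
      obtain ⟨k, hk, heq⟩ := hq
      rw [Finset.mem_Icc] at hk
      obtain ⟨hlb, hub⟩ := hk
      rw [Prod.mk.injEq] at heq
      obtain ⟨he1, he2⟩ := heq
      have hub' : k * (n : ℤ) ≤ w (((q.1 : ℕ) : ℤ) + 1) - w (((q.2 : ℕ) : ℤ) + 1) - 1 :=
        (Int.le_ediv_iff_mul_le hn).mp hub
      have hlb' : (((q.1 : ℕ) : ℤ) - ((q.2 : ℕ) : ℤ)) < k * (n : ℤ) :=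
        (Int.ediv_lt_iff_lt_mul hn).mp (by omega)
      have hwj : w j = w (((q.2 : ℕ) : ℤ) + 1) + k * (n : ℤ) := by
        rw [← he2]; exact wAdd _ _
      have ha2 : ((q.1 : ℕ) : ℤ) < n := by exact_mod_cast q.1.2
      have ha0 : (0 : ℤ) ≤ ((q.1 : ℕ) : ℤ) := by positivity
      have hb0 : (0 : ℤ) ≤ ((q.2 : ℕ) : ℤ) := by positivity
      exact ⟨by linarith, by linarith, by linarith, by rw [← he1]; linarith⟩
  have hdisj : ∀ q ∈ (Finset.univ : Finset (Fin n × Fin n)), ∀ q' ∈ Finset.univ, q ≠ q' →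
      Disjoint
        ((Finset.Icc ((((q.1 : ℕ) : ℤ) - ((q.2 : ℕ) : ℤ)) / (n : ℤ) + 1)
          ((w (((q.1 : ℕ) : ℤ) + 1) - w (((q.2 : ℕ) : ℤ) + 1) - 1) / (n : ℤ))).image
          (fun k => ((((q.1 : ℕ) : ℤ) + 1, ((q.2 : ℕ) : ℤ) + 1 + k * (n : ℤ)))))
        ((Finset.Icc ((((q'.1 : ℕ) : ℤ) - ((q'.2 : ℕ) : ℤ)) / (n : ℤ) + 1)
          ((w (((q'.1 : ℕ) : ℤ) + 1) - w (((q'.2 : ℕ) : ℤ) + 1) - 1) / (n : ℤ))).image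
          (fun k => ((((q'.1 : ℕ) : ℤ) + 1, ((q'.2 : ℕ) : ℤ) + 1 + k * (n : ℤ))))) := by
    intro q _ q' _ hne
    rw [Finset.disjoint_left]
    intro x hx hx'
    obtain ⟨k, -, hk⟩ := Finset.mem_image.mp hx
    obtain ⟨k', -, hk'⟩ := Finset.mem_image.mp hx'
    rw [← hk'] at hk
    rw [Prod.mk.injEq] at hk
    obtain ⟨h1, h2⟩ := hk
    apply hne
    have e1 : q.1 = q'.1 := by
      apply Fin.ext
      have : ((q.1 : ℕ) : ℤ) = ((q'.1 : ℕ) : ℤ) := by omega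
      exact_mod_cast this
    have hsub : ((q'.2 : ℕ) : ℤ) - ((q.2 : ℕ) : ℤ) = (k - k') * (n : ℤ) := by
      have := sub_mul k k' (n : ℤ)
      linarith
    have hq2 : ((q.2 : ℕ) : ℤ) < n := by exact_mod_cast q.2.2
    have hq2' : ((q'.2 : ℕ) : ℤ) < n := by exact_mod_cast q'.2.2
    have hb0 : (0 : ℤ) ≤ ((q.2 : ℕ) : ℤ) := by positivity
    have hb0' : (0 : ℤ) ≤ ((q'.2 : ℕ) : ℤ) := by positivity
    have hkk : k = k' := by
      rcases lt_trichotomy k k' with h | h | h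
      · have : (k - k') * (n : ℤ) ≤ (-1) * (n : ℤ) :=
          mul_le_mul_of_nonneg_right (by omega) (le_of_lt hn)
        linarith
      · exact h
      · have : (1 : ℤ) * (n : ℤ) ≤ (k - k') * (n : ℤ) :=
          mul_le_mul_of_nonneg_right (by omega) (le_of_lt hn)
        linarith
    have e2 : q.2 = q'.2 := by
      apply Fin.ext
      have : ((q.2 : ℕ) : ℤ) = ((q'.2 : ℕ) : ℤ) := by
        rw [hkk] at hsub
        simp at hsub
        omega
      exact_mod_cast this
    exact Prod.ext e1 e2
  unfold lenAff
  rw [hset, Set.ncard_coe_finset, hF, Finset.card_biUnion hdisj]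
  apply Finset.sum_congr rfl
  intro q _
  rw [Finset.card_image_of_injective _ (fun k k' h => by
    rw [Prod.mk.injEq] at h
    have := h.2
    have : k * (n : ℤ) = k' * (n : ℤ) := by linarith
    exact mul_right_cancel₀ hnz this), Int.card_Icc]
  congr 1
  ring

lemma keyArith (n : ℕ) (hn0 : 0 < (n : ℤ)) (x y W g : ℤ) (hx0 : 0 ≤ x) (hxn : x < n)
    (hy0 : 0 ≤ y) (hyn : y < n)
    (hs1 : y < x → 1 ≤ W ∧ 0 ≤ g) (hs2 : x < y → W ≤ -1 ∧ g ≤ 0)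
    (hs3 : x = y → W = 0 ∧ g = 0) :
    (((W - 1) / (n : ℤ) + g - (x - y) / (n : ℤ)).toNat
      = ((W - 1) / (n : ℤ) - (x - y) / (n : ℤ)).toNat
        + ((x - y - 1) / (n : ℤ) + g - (x - y) / (n : ℤ)).toNat)
    ∧ ((x - y - 1) / (n : ℤ) + g - (x - y) / (n : ℤ)).toNat = g.toNat := by
  have hnz : (n : ℤ) ≠ 0 := ne_of_gt hn0
  have negdiv : ∀ z : ℤ, -(n : ℤ) ≤ z → z < 0 → z / (n : ℤ) = -1 := by
    intro z h1 h2
    have hz : z = (z + n) + (n : ℤ) * (-1) := by ring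
    rw [hz, Int.add_mul_ediv_left _ _ hnz, Int.ediv_eq_zero_of_lt (by omega) (by omega)]
    norm_num
  rcases lt_trichotomy x y with h | h | h
  · obtain ⟨hW, hg⟩ := hs2 h
    have hA : (x - y) / (n : ℤ) = -1 := negdiv _ (by omega) (by omega)
    have hA1 : (x - y - 1) / (n : ℤ) = -1 := negdiv _ (by omega) (by omega)
    have hD : (W - 1) / (n : ℤ) < 0 :=
      (Int.ediv_lt_iff_lt_mul hn0).mpr (show W - 1 < 0 * (n : ℤ) by rw [zero_mul]; omega)
    rw [hA, hA1]
    constructor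
    · rw [Int.toNat_of_nonpos (by omega), Int.toNat_of_nonpos (by omega),
        Int.toNat_of_nonpos (by omega)]
    · rw [show (-1 + g - -1 : ℤ) = g by ring]
  · obtain ⟨hW, hg⟩ := hs3 h
    subst hW; subst hg
    have hA : (x - y) / (n : ℤ) = 0 := by rw [h, sub_self, Int.zero_ediv]
    have hA1 : (x - y - 1) / (n : ℤ) = -1 := by
      rw [show x - y - 1 = -1 by omega]
      exact negdiv _ (by omega) (by omega)
    have hD : ((0 : ℤ) - 1) / (n : ℤ) = -1 := by
      rw [show (0 : ℤ) - 1 = -1 by ring]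
      exact negdiv _ (by omega) (by omega)
    rw [hA, hA1, hD]
    norm_num
  · obtain ⟨hW, hg⟩ := hs1 h
    have hA : (x - y) / (n : ℤ) = 0 := Int.ediv_eq_zero_of_lt (by omega) (by omega)
    have hA1 : (x - y - 1) / (n : ℤ) = 0 := Int.ediv_eq_zero_of_lt (by omega) (by omega)
    have hD : 0 ≤ (W - 1) / (n : ℤ) := Int.ediv_nonneg (by omega) (le_of_lt hn0)
    rw [hA, hA1]
    constructor
    · rw [sub_zero, sub_zero, show ((0 : ℤ) + g - 0) = g by ring]
      exact Int.toNat_add hD hg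
    · rw [show ((0 : ℤ) + g - 0) = g by ring]

/-- if `w ∈ W̃_n` is affine Grassmannian and `γ` is antidominant, then
`w ∘ t_γ` is affine Grassmannian and `ℓ(w ∘ t_γ) = ℓ(w) + ℓ(t_γ)`, where
`ℓ(t_γ) = Σ_{1 ≤ i < j ≤ n} (γ_j - γ_i)`. -/
theorem stmt11 (n : ℕ) [NeZero n] (hn : 2 ≤ n) (w : ℤ → ℤ) (hw : IsAffPerm n w)
    (hgr : IsAffGr n w) (γ : Fin n → ℤ) (hγ : Monotone γ) :
    IsAffGr n (w ∘ tFun n γ) ∧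
    lenAff n (w ∘ tFun n γ) = lenAff n w + lenAff n (tFun n γ) ∧
    (lenAff n (tFun n γ) : ℤ) = pairSum n γ := by
  have hn0 : 0 < (n : ℤ) := npos n
  have hnz : (n : ℤ) ≠ 0 := ne_of_gt hn0
  have wAdd : ∀ (k m : ℤ), w (m + k * n) = w m + k * n := wAdd' n w hw.2
  have htper : ∀ i : ℤ, tFun n γ (i + n) = tFun n γ i + n := by
    intro i
    show i + (n:ℤ) + (n:ℤ) * γ (resid n (i + n)) = i + (n:ℤ) * γ (resid n i) + n
    rw [resid_add_n]
    ring
  have hwtper : ∀ i : ℤ, (w ∘ tFun n γ) (i + n) = (w ∘ tFun n γ) i + n := by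
    intro i
    show w (tFun n γ (i + n)) = w (tFun n γ i) + n
    rw [htper, hw.2]
  have hteval : ∀ a : Fin n, tFun n γ (((a:ℕ):ℤ) + 1) = ((a:ℕ):ℤ) + 1 + (n:ℤ) * γ a := by
    intro a
    show ((a:ℕ):ℤ) + 1 + (n:ℤ) * γ (resid n (((a:ℕ):ℤ) + 1)) = _
    rw [resid_coe]
  have hwteval : ∀ a : Fin n, w (tFun n γ (((a:ℕ):ℤ) + 1)) = w (((a:ℕ):ℤ) + 1) + γ a * (n:ℤ) := by
    intro a
    rw [hteval a, mul_comm (n:ℤ) (γ a)]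
    exact wAdd _ _
  have hc : ∀ a b : Fin n, ((b:ℕ):ℤ) < ((a:ℕ):ℤ) → w (((b:ℕ):ℤ)+1) < w (((a:ℕ):ℤ)+1) := by
    intro a b hba
    refine grChain n w hgr (((a:ℕ):ℤ)+1) (((b:ℕ):ℤ)+1) (by omega) (by omega) ?_
    have := a.2
    omega
  -- the common per-pair key facts
  have key : ∀ q : Fin n × Fin n,
      (((w (((q.1:ℕ):ℤ)+1) - w (((q.2:ℕ):ℤ)+1) - 1) / (n:ℤ) + (γ q.1 - γ q.2)
          - (((q.1:ℕ):ℤ) - ((q.2:ℕ):ℤ)) / (n:ℤ)).toNat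
        = ((w (((q.1:ℕ):ℤ)+1) - w (((q.2:ℕ):ℤ)+1) - 1) / (n:ℤ)
          - (((q.1:ℕ):ℤ) - ((q.2:ℕ):ℤ)) / (n:ℤ)).toNat
          + ((((q.1:ℕ):ℤ) - ((q.2:ℕ):ℤ) - 1) / (n:ℤ) + (γ q.1 - γ q.2)
            - (((q.1:ℕ):ℤ) - ((q.2:ℕ):ℤ)) / (n:ℤ)).toNat)
      ∧ ((((q.1:ℕ):ℤ) - ((q.2:ℕ):ℤ) - 1) / (n:ℤ) + (γ q.1 - γ q.2)
          - (((q.1:ℕ):ℤ) - ((q.2:ℕ):ℤ)) / (n:ℤ)).toNat = (γ q.1 - γ q.2).toNat := by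
    intro q
    have hq1n : ((q.1:ℕ):ℤ) < n := by exact_mod_cast q.1.2
    have hq2n : ((q.2:ℕ):ℤ) < n := by exact_mod_cast q.2.2
    refine keyArith n hn0 ((q.1:ℕ):ℤ) ((q.2:ℕ):ℤ)
      (w (((q.1:ℕ):ℤ)+1) - w (((q.2:ℕ):ℤ)+1)) (γ q.1 - γ q.2)
      (by omega) hq1n (by omega) hq2n ?_ ?_ ?_
    · intro h
      have h1 := hc q.1 q.2 h
      have hle : q.2 ≤ q.1 := by rw [Fin.le_def]; omega
      have h2 := hγ hle
      exact ⟨by omega, by omega⟩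
    · intro h
      have h1 := hc q.2 q.1 h
      have hle : q.1 ≤ q.2 := by rw [Fin.le_def]; omega
      have h2 := hγ hle
      exact ⟨by omega, by omega⟩
    · intro h
      have hab : q.1 = q.2 := by apply Fin.ext; exact_mod_cast h
      exact ⟨by rw [hab, sub_self], by rw [hab, sub_self]⟩
  -- rewriting the (w∘t) and t summands
  have et : ∀ q : Fin n × Fin n,
      (tFun n γ (((q.1:ℕ):ℤ) + 1) - tFun n γ (((q.2:ℕ):ℤ) + 1) - 1) / (n:ℤ)
        = (((q.1:ℕ):ℤ) - ((q.2:ℕ):ℤ) - 1) / (n:ℤ) + (γ q.1 - γ q.2) := by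
    intro q
    rw [hteval, hteval,
      show (((q.1:ℕ):ℤ) + 1 + (n:ℤ) * γ q.1 - (((q.2:ℕ):ℤ) + 1 + (n:ℤ) * γ q.2) - 1)
        = (((q.1:ℕ):ℤ) - ((q.2:ℕ):ℤ) - 1) + (n:ℤ) * (γ q.1 - γ q.2) by ring,
      Int.add_mul_ediv_left _ _ hnz]
  have ewt : ∀ q : Fin n × Fin n,
      ((w ∘ tFun n γ) (((q.1:ℕ):ℤ) + 1) - (w ∘ tFun n γ) (((q.2:ℕ):ℤ) + 1) - 1) / (n:ℤ)
        = (w (((q.1:ℕ):ℤ) + 1) - w (((q.2:ℕ):ℤ) + 1) - 1) / (n:ℤ) + (γ q.1 - γ q.2) := by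
    intro q
    show (w (tFun n γ (((q.1:ℕ):ℤ) + 1)) - w (tFun n γ (((q.2:ℕ):ℤ) + 1)) - 1) / (n:ℤ) = _
    rw [hwteval, hwteval,
      show (w (((q.1:ℕ):ℤ) + 1) + γ q.1 * (n:ℤ) - (w (((q.2:ℕ):ℤ) + 1) + γ q.2 * (n:ℤ)) - 1)
        = (w (((q.1:ℕ):ℤ) + 1) - w (((q.2:ℕ):ℤ) + 1) - 1) + (n:ℤ) * (γ q.1 - γ q.2) by ring,
      Int.add_mul_ediv_left _ _ hnz]
  have Ht' : lenAff n (tFun n γ) = ∑ q : Fin n × Fin n, (γ q.1 - γ q.2).toNat := by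
    rw [lenAff_eq_sum n (tFun n γ) htper]
    apply Finset.sum_congr rfl
    intro q _
    rw [et q]
    exact (key q).2
  refine ⟨?_, ?_, ?_⟩
  · -- Grassmannian
    intro i h1 h2
    have hr1 := resid_val n i h1 (by omega)
    have hr2 := resid_val n (i+1) (by omega) (by omega)
    have hle : resid n i ≤ resid n (i+1) := by
      rw [Fin.le_def]
      omega
    have hγle : γ (resid n i) ≤ γ (resid n (i+1)) := hγ hle
    have hww : w i < w (i+1) := hgr i h1 h2
    show w (tFun n γ i) < w (tFun n γ (i+1))
    have e1 : w (tFun n γ i) = w i + γ (resid n i) * (n:ℤ) := by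
      show w (i + (n:ℤ) * γ (resid n i)) = _
      rw [mul_comm]
      exact wAdd _ _
    have e2 : w (tFun n γ (i+1)) = w (i+1) + γ (resid n (i+1)) * (n:ℤ) := by
      show w ((i+1) + (n:ℤ) * γ (resid n (i+1))) = _
      rw [mul_comm]
      exact wAdd _ _
    rw [e1, e2]
    have := mul_le_mul_of_nonneg_right hγle (le_of_lt hn0)
    linarith
  · -- additivity
    rw [lenAff_eq_sum n w hw.2, Ht', lenAff_eq_sum n (w ∘ tFun n γ) hwtper,
      ← Finset.sum_add_distrib]
    apply Finset.sum_congr rfl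
    intro q _
    rw [ewt q]
    rw [(key q).1, (key q).2]
  · -- pairSum
    rw [Ht', Nat.cast_sum, pairSum,
      ← Finset.sum_filter_add_sum_filter_not Finset.univ (fun q : Fin n × Fin n => q.2 < q.1)]
    have hz2 : ∑ q ∈ Finset.univ.filter (fun q : Fin n × Fin n => ¬ q.2 < q.1),
        (((γ q.1 - γ q.2).toNat : ℕ) : ℤ) = 0 := by
      apply Finset.sum_eq_zero
      intro q hq
      rw [Finset.mem_filter] at hq
      have hle : q.1 ≤ q.2 := not_lt.mp hq.2
      have := hγ hle
      rw [Int.toNat_of_nonpos (by omega)]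
      simp
    rw [hz2, add_zero]
    refine Finset.sum_nbij' (i := Prod.swap) (j := Prod.swap) ?_ ?_ ?_ ?_ ?_
    · intro q hq
      rw [Finset.mem_filter] at hq ⊢
      exact ⟨Finset.mem_univ _, hq.2⟩
    · intro p hp
      rw [Finset.mem_filter] at hp ⊢
      exact ⟨Finset.mem_univ _, hp.2⟩
    · intro q _; simp
    · intro p _; simp
    · intro q hq
      rw [Finset.mem_filter] at hq
      have hle : γ q.2 ≤ γ q.1 := hγ (le_of_lt hq.2)
      show (((γ q.1 - γ q.2).toNat : ℕ) : ℤ) = γ q.1 - γ q.2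
      exact Int.toNat_of_nonneg (by omega)
end
end

section
/- Let u be a permutation of {1,…,n} and γ ∈ ℤⁿ. Define γ_u ∈ ℤⁿ by (γ_u)_j := −#{i : j ≤ i ≤ n−1 and u(i) > u(i+1)} for 1 ≤ j ≤ n. Then ū ∘ t_γ ∈ W̃_n is affine Grassmannian if and only if γ − γ_u is antidominant. -/
noncomputable section

/-- `γ_u ∈ ℤⁿ`, `(γ_u)_j = -#{i : j ≤ i ≤ n-1, u(i) > u(i+1)}` (1-based indexing;
in 0-based terms the descent positions `i` range over `Fin (n-1)`). -/
def gammaU (n : ℕ) (u : Equiv.Perm (Fin n)) : Fin n → ℤ := fun j =>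
  -((Finset.univ.filter (fun i : Fin (n - 1) =>
      (j : ℕ) ≤ (i : ℕ) ∧
        u ⟨(i : ℕ) + 1, by have := i.isLt; omega⟩
          < u ⟨(i : ℕ), by have := i.isLt; omega⟩)).card : ℤ)

-- basic lemmas
lemma resid_eq (n : ℕ) [NeZero n] (i : ℤ) (h1 : 1 ≤ i) (h2 : i ≤ n) :
    resid n i = ⟨(i - 1).toNat, by omega⟩ := by
  unfold resid
  congr 1
  rw [Int.emod_eq_of_lt (by omega) (by omega)]

lemma resid_add_mul (n : ℕ) [NeZero n] (i c : ℤ) :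
    resid n (i + n * c) = resid n i := by
  unfold resid
  congr 1
  have : i + n * c - 1 = (i - 1) + (n : ℤ) * c := by ring
  rw [this, Int.add_mul_emod_self_left]

-- key arithmetic lemma
lemma key (n a b da db : ℤ) (hn : 0 < n) (ha : 0 ≤ a) (han : a < n) (hb : 0 ≤ b)
    (hbn : b < n) (hab : a ≠ b) :
    a + n * da < b + n * db ↔ da + (if b < a then 1 else 0) ≤ db := by
  split_ifs with h
  · constructor
    · intro h1
      by_contra h2
      push_neg at h2
      have : db ≤ da := by omega
      have := mul_le_mul_of_nonneg_left this (le_of_lt hn)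
      omega
    · intro h1
      have : da + 1 ≤ db := by omega
      have := mul_le_mul_of_nonneg_left this (le_of_lt hn)
      nlinarith
  · push_neg at h
    have hab' : a < b := lt_of_le_of_ne h hab
    constructor
    · intro h1
      by_contra h2
      push_neg at h2
      have : db + 1 ≤ da := by omega
      have := mul_le_mul_of_nonneg_left this (le_of_lt hn)
      nlinarith
    · intro h1
      have : da ≤ db := by omega
      have := mul_le_mul_of_nonneg_left this (le_of_lt hn)
      omega

-- monotone on Fin n via adjacent
lemma mono_iff {n : ℕ} (f : Fin n → ℤ) :
    Monotone f ↔ ∀ j : ℕ, ∀ h : j + 1 < n, f ⟨j, by omega⟩ ≤ f ⟨j + 1, h⟩ := by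
  constructor
  · intro hf j h
    exact hf (by simp [Fin.le_def])
  · intro hadj
    have main : ∀ d i : ℕ, ∀ h : i + d < n, f ⟨i, by omega⟩ ≤ f ⟨i + d, h⟩ := by
      intro d
      induction d with
      | zero => intro i h; simp
      | succ d ih =>
        intro i h
        have h1 : f ⟨i, by omega⟩ ≤ f ⟨i + d, by omega⟩ := ih i (by omega)
        have h2 : f ⟨i + d, by omega⟩ ≤ f ⟨i + d + 1, by omega⟩ := hadj (i + d) (by omega)
        exact le_trans h1 (by simpa only [Nat.add_assoc] using h2)
    intro i k hik
    simp only [Fin.le_def] at hik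
    have := main ((k : ℕ) - i) i (by omega)
    convert this using 3
    · rfl
    · omega

lemma filter_card_step {m : ℕ} (D : Fin m → Prop) [DecidablePred D] (j : ℕ) (hj : j < m) :
    (Finset.univ.filter (fun i : Fin m => j ≤ (i : ℕ) ∧ D i)).card =
      (Finset.univ.filter (fun i : Fin m => j + 1 ≤ (i : ℕ) ∧ D i)).card
        + (if D ⟨j, hj⟩ then 1 else 0) := by
  set jF : Fin m := ⟨j, hj⟩ with hjF
  have hset : Finset.univ.filter (fun i : Fin m => j + 1 ≤ (i : ℕ) ∧ D i) =
      (Finset.univ.filter (fun i : Fin m => j ≤ (i : ℕ) ∧ D i)).erase jF := by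
    ext i
    simp only [Finset.mem_filter, Finset.mem_erase, Finset.mem_univ, true_and, ne_eq,
      Fin.ext_iff, hjF]
    constructor
    · rintro ⟨h1, h2⟩; exact ⟨by omega, by omega, h2⟩
    · rintro ⟨h1, h2, h3⟩; exact ⟨by omega, h3⟩
  split_ifs with hD
  · have hmem : jF ∈ Finset.univ.filter (fun i : Fin m => j ≤ (i : ℕ) ∧ D i) := by
      simpa [hjF] using hD
    rw [hset, Finset.card_erase_of_mem hmem]
    have := Finset.card_pos.mpr ⟨jF, hmem⟩
    omega
  · have hnmem : jF ∉ Finset.univ.filter (fun i : Fin m => j ≤ (i : ℕ) ∧ D i) := by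
      simpa [hjF] using hD
    rw [hset, Finset.erase_eq_of_notMem hnmem]
    omega

lemma gammaU_adj (n : ℕ) (u : Equiv.Perm (Fin n)) (j : ℕ) (h : j + 1 < n) :
    gammaU n u ⟨j + 1, h⟩ =
      gammaU n u ⟨j, by omega⟩ +
        (if u ⟨j + 1, h⟩ < u ⟨j, by omega⟩ then 1 else 0) := by
  unfold gammaU
  have hj : j < n - 1 := by omega
  rw [filter_card_step (fun i : Fin (n - 1) =>
      u ⟨(i : ℕ) + 1, by have := i.isLt; omega⟩ < u ⟨(i : ℕ), by have := i.isLt; omega⟩) j hj]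
  push_cast
  ring

lemma wval (n : ℕ) [NeZero n] (u : Equiv.Perm (Fin n)) (γ : Fin n → ℤ) (j : ℕ) (hj : j < n) :
    (ubarFun n u ∘ tFun n γ) ((j : ℤ) + 1) =
      ((u ⟨j, hj⟩ : ℕ) : ℤ) + 1 + n * γ ⟨j, hj⟩ := by
  have hn0 : (n : ℤ) ≠ 0 := by exact_mod_cast NeZero.ne n
  have hr : resid n ((j : ℤ) + 1) = ⟨j, hj⟩ := by
    rw [resid_eq n _ (by omega) (by exact_mod_cast by omega)]
    congr 1
    omega
  simp only [Function.comp_apply, tFun, ubarFun, resid_add_mul, hr]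
  have hdiv : ((j : ℤ) + 1 + n * γ ⟨j, hj⟩ - 1) / n = γ ⟨j, hj⟩ := by
    have heq : ((j : ℤ) + 1 + n * γ ⟨j, hj⟩ - 1) = (j : ℤ) + γ ⟨j, hj⟩ * n := by ring
    rw [heq, Int.add_mul_ediv_right _ _ hn0,
      Int.ediv_eq_zero_of_lt (by omega) (by exact_mod_cast hj)]
    ring
  rw [hdiv]

/-- `ū ∘ t_γ` is affine Grassmannian iff `γ - γ_u` is antidominant. -/
theorem stmt12 (n : ℕ) [NeZero n] (hn : 2 ≤ n) (u : Equiv.Perm (Fin n)) (γ : Fin n → ℤ) :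
    IsAffGr n (ubarFun n u ∘ tFun n γ) ↔ Monotone (γ - gammaU n u) := by
  have hn0 : (0 : ℤ) < n := by exact_mod_cast by omega
  rw [mono_iff]
  have main : ∀ j : ℕ, ∀ hj : j + 1 < n,
      ((ubarFun n u ∘ tFun n γ) ((j : ℤ) + 1) < (ubarFun n u ∘ tFun n γ) (((j : ℤ) + 1) + 1) ↔
        (γ - gammaU n u) ⟨j, by omega⟩ ≤ (γ - gammaU n u) ⟨j + 1, hj⟩) := by
    intro j hj
    set a : Fin n := ⟨j, by omega⟩ with ha
    set b : Fin n := ⟨j + 1, hj⟩ with hb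
    have h2 : ((j : ℤ) + 1) + 1 = ((j + 1 : ℕ) : ℤ) + 1 := by push_cast; ring
    rw [wval n u γ j (by omega), h2, wval n u γ (j + 1) hj]
    have hab : ((u a : ℕ) : ℤ) ≠ ((u b : ℕ) : ℤ) := by
      intro hc
      have h5 : u a = u b := Fin.ext (by exact_mod_cast hc)
      have h6 : a = b := u.injective h5
      simp [ha, hb, Fin.ext_iff] at h6
    have hkey := key (n : ℤ) ((u a : ℕ) : ℤ) ((u b : ℕ) : ℤ) (γ a) (γ b) hn0
      (by positivity) (by exact_mod_cast (u a).isLt) (by positivity)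
      (by exact_mod_cast (u b).isLt) hab
    have hcond : (((u b : ℕ) : ℤ) < ((u a : ℕ) : ℤ)) ↔ u b < u a := by
      rw [Fin.lt_def]; exact_mod_cast Iff.rfl
    have hite : (if ((u b : ℕ) : ℤ) < ((u a : ℕ) : ℤ) then (1 : ℤ) else 0)
        = (if u b < u a then (1 : ℤ) else 0) := if_congr hcond rfl rfl
    rw [hite] at hkey
    simp only [Pi.sub_apply, hb, gammaU_adj n u j hj]
    show ((u a : ℕ) : ℤ) + 1 + n * γ a < ((u b : ℕ) : ℤ) + 1 + n * γ b ↔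
      γ a - gammaU n u a ≤ γ b - (gammaU n u a + if u b < u a then 1 else 0)
    constructor
    · intro hlt
      have h4 := hkey.mp (by linarith)
      split_ifs at h4 ⊢ <;> linarith
    · intro hle
      have h4 : γ a + (if u b < u a then (1 : ℤ) else 0) ≤ γ b := by
        split_ifs at hle ⊢ <;> linarith
      have := hkey.mpr h4
      linarith
  constructor
  · intro hAG j hj
    exact (main j hj).mp (hAG ((j : ℤ) + 1) (by omega) (by exact_mod_cast by omega))
  · intro hm i h1 h2
    set j : ℕ := (i - 1).toNat with hjdef
    have hi : i = (j : ℤ) + 1 := by omega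
    have hjn : j + 1 < n := by
      have : i < (n : ℤ) := h2
      omega
    rw [hi]
    exact (main j hjn).mpr (hm j hjn)
end
end

section
/- For 1 ≤ i ≤ n−1 define the ℤ-linear endomorphism T_i of R(T) by T_i(f) = (1 − e^{a_i − a_{i+1}})^{−1}·(s_i(f) − f), where s_i exchanges e^{a_i} and e^{a_{i+1}}, and define T_0(f) = (1 − e^{a_n − a_1})^{−1}·(s_θ(f) − f), where s_θ exchanges e^{a_n} and e^{a_1}. Then, with indices taken modulo n, these operators satisfy the affine braid relations as endomorphisms of R(T): T_i T_{i+1} T_i = T_{i+1} T_i T_{i+1} for all i ∈ ℤ/nℤ, and T_i T_j = T_j T_i whenever i − j ≢ ±1 (mod n). -/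
noncomputable section

open Equiv Finsupp

namespace Stmt15Aux
set_option linter.unusedSectionVars false

variable {n : ℕ} [NeZero n]

lemma eexp_add (l m : Fin n →₀ ℤ) : eexp n (l + m) = eexp n l * eexp n m := by
  simp [eexp, AddMonoidAlgebra.single_mul_single]

lemma eexp_ne_zero (l : Fin n →₀ ℤ) : eexp n l ≠ 0 := by
  simpa [eexp] using Finsupp.single_ne_zero.mpr (one_ne_zero (α := ℤ))

lemma one_sub_eexp_ne_zero {l : Fin n →₀ ℤ} (hl : l ≠ 0) : (1 : RT n) - eexp n l ≠ 0 := by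
  intro h
  have h1 : (1 : RT n) = eexp n l := by rwa [sub_eq_zero] at h
  rw [AddMonoidAlgebra.one_def, eexp] at h1
  rcases AddMonoidAlgebra.single_inj.mp h1 with ⟨h2, -⟩ | ⟨h2, -⟩
  · exact hl h2.symm
  · exact one_ne_zero h2

lemma permRT_single (σ : Equiv.Perm (Fin n)) (l : Fin n →₀ ℤ) (c : ℤ) :
    permRT n σ (AddMonoidAlgebra.single l c)
      = AddMonoidAlgebra.single (Finsupp.equivMapDomain (σ : Fin n ≃ Fin n) l) c := by
  simp [permRT]

lemma permRT_eexp (σ : Equiv.Perm (Fin n)) (l : Fin n →₀ ℤ) :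
    permRT n σ (eexp n l) = eexp n (Finsupp.equivMapDomain (σ : Fin n ≃ Fin n) l) :=
  permRT_single σ l 1

lemma permRT_comp (σ τ : Equiv.Perm (Fin n)) (f : RT n) :
    permRT n σ (permRT n τ f) = permRT n (σ * τ) f := by
  induction f using AddMonoidAlgebra.induction_linear with
  | zero => simp
  | add f g hf hg => rw [map_add, map_add, map_add, hf, hg]
  | single l c =>
      rw [permRT_single, permRT_single, permRT_single, ← Finsupp.equivMapDomain_trans]
      rfl

lemma permRT_one (f : RT n) : permRT n 1 f = f := by
  induction f using AddMonoidAlgebra.induction_linear with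
  | zero => simp
  | add f g hf hg => rw [map_add, hf, hg]
  | single l c => rw [permRT_single]; congr 1; exact Finsupp.equivMapDomain_refl l

lemma emd_sub (e : Fin n ≃ Fin n) (x y : Fin n →₀ ℤ) :
    Finsupp.equivMapDomain e (x - y)
      = Finsupp.equivMapDomain e x - Finsupp.equivMapDomain e y := by
  ext a; simp [Finsupp.equivMapDomain_apply]

lemma single_sub_ne_zero {i j : Fin n} (h : i ≠ j) :
    (Finsupp.single i 1 - Finsupp.single j (1 : ℤ)) ≠ 0 := by
  intro hc
  have hji : j ≠ i := fun hji => h hji.symm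
  have := DFunLike.congr_fun hc i
  rw [Finsupp.sub_apply] at this
  rw [Finsupp.single_eq_same, Finsupp.single_eq_of_ne' hji, Finsupp.coe_zero, Pi.zero_apply] at this
  omega


abbrev KT (n : ℕ) : Type := FractionRing (RT n)

def iK (n : ℕ) : RT n →+* KT n := algebraMap _ _

lemma iK_inj (n : ℕ) : Function.Injective (iK n) := IsFractionRing.injective _ _

def SK (σ : Equiv.Perm (Fin n)) : KT n ≃+* KT n :=
  IsLocalization.ringEquivOfRingEquiv (M := nonZeroDivisors (RT n)) (KT n) (KT n)
    (permRT n σ).toRingEquiv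
    (show (nonZeroDivisors (RT n)).map ((permRT n σ).toRingEquiv).toMonoidHom
        = nonZeroDivisors (RT n) from
      MulEquivClass.map_nonZeroDivisors (F := RT n ≃+* RT n) (permRT n σ).toRingEquiv)

lemma SK_alg (σ : Equiv.Perm (Fin n)) (f : RT n) : SK σ (iK n f) = iK n (permRT n σ f) :=
  IsLocalization.ringEquivOfRingEquiv_eq _ _

set_option synthInstance.maxHeartbeats 1000000 in
lemma SK_sub (σ : Equiv.Perm (Fin n)) (x y : KT n) : SK σ (x - y) = SK σ x - SK σ y :=
  map_sub _ _ _

set_option synthInstance.maxHeartbeats 1000000 in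
lemma SK_mul (σ : Equiv.Perm (Fin n)) (x y : KT n) : SK σ (x * y) = SK σ x * SK σ y :=
  map_mul _ _ _

set_option synthInstance.maxHeartbeats 1000000 in
lemma SK_div (σ : Equiv.Perm (Fin n)) (x y : KT n) : SK σ (x / y) = SK σ x / SK σ y :=
  map_div₀ _ _ _

set_option synthInstance.maxHeartbeats 1000000 in
lemma SK_one (σ : Equiv.Perm (Fin n)) : SK σ (1 : KT n) = 1 := map_one _

lemma SK_comp (σ τ : Equiv.Perm (Fin n)) (y : KT n) : SK σ (SK τ y) = SK (σ * τ) y := by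
  have h : ((SK σ : KT n ≃+* KT n) : KT n →+* KT n).comp ((SK τ : KT n ≃+* KT n) : KT n →+* KT n)
      = ((SK (σ * τ) : KT n ≃+* KT n) : KT n →+* KT n) := by
    apply IsLocalization.ringHom_ext (nonZeroDivisors (RT n))
    refine RingHom.ext fun f => ?_
    show SK σ (SK τ (iK n f)) = SK (σ * τ) (iK n f)
    rw [SK_alg, SK_alg, SK_alg, permRT_comp]
  exact RingHom.congr_fun h y

lemma SK_invol (σ : Equiv.Perm (Fin n)) (hσ : σ * σ = 1) (y : KT n) : SK σ (SK σ y) = y := by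
  rw [SK_comp, hσ]
  have h : ((SK (1 : Equiv.Perm (Fin n)) : KT n ≃+* KT n) : KT n →+* KT n)
      = RingHom.id (KT n) := by
    apply IsLocalization.ringHom_ext (nonZeroDivisors (RT n))
    refine RingHom.ext fun f => ?_
    show SK (1 : Equiv.Perm (Fin n)) (iK n f) = iK n f
    rw [SK_alg, permRT_one]
  exact RingHom.congr_fun h y


lemma iK_eexp_ne_zero (l : Fin n →₀ ℤ) : iK n (eexp n l) ≠ 0 := by
  intro h
  exact eexp_ne_zero l (iK_inj n (by rw [h, map_zero]))

lemma one_sub_iK_eexp_ne_zero {l : Fin n →₀ ℤ} (hl : l ≠ 0) :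
    (1 : KT n) - iK n (eexp n l) ≠ 0 := by
  intro h
  apply one_sub_eexp_ne_zero hl
  apply iK_inj n
  rw [map_sub, map_one, map_zero, h]

lemma eexp_zero : eexp n (0 : Fin n →₀ ℤ) = 1 := by
  simp [eexp, AddMonoidAlgebra.one_def]

lemma iK_eexp_neg (l : Fin n →₀ ℤ) : iK n (eexp n (-l)) = (iK n (eexp n l))⁻¹ := by
  have h : iK n (eexp n l) * iK n (eexp n (-l)) = 1 := by
    rw [← map_mul, ← eexp_add, add_neg_cancel, eexp_zero, map_one]
  exact (inv_eq_of_mul_eq_one_right h).symm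

lemma nat_aux1 {n k : ℕ} (hn : 3 ≤ n) (hk : k < n) : (k + 1 % n) % n ≠ k := by
  have e1 : 1 % n = 1 := Nat.mod_eq_of_lt (by omega)
  rw [e1]
  rcases Nat.lt_or_ge (k + 1) n with h | h
  · rw [Nat.mod_eq_of_lt h]; omega
  · rw [show k + 1 = n by omega, Nat.mod_self]; omega

lemma nat_aux2 {n k : ℕ} (hn : 3 ≤ n) (hk : k < n) : ((k + 1 % n) % n + 1 % n) % n ≠ k := by
  have e1 : 1 % n = 1 := Nat.mod_eq_of_lt (by omega)
  rw [e1]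
  rcases Nat.lt_or_ge (k + 1) n with h | h
  · rw [Nat.mod_eq_of_lt h]
    rcases Nat.lt_or_ge (k + 2) n with h2 | h2
    · rw [Nat.mod_eq_of_lt (by omega)]; omega
    · rw [show k + 1 + 1 = n by omega, Nat.mod_self]; omega
  · rw [show k + 1 = n by omega, Nat.mod_self, Nat.zero_add, e1]; omega

lemma fin_ne_add_one (hn : 3 ≤ n) (i : Fin n) : i ≠ i + 1 := by
  intro h
  have hv := congrArg Fin.val h
  rw [Fin.val_add, Fin.val_one'] at hv
  exact nat_aux1 hn i.isLt hv.symm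

lemma fin_ne_add_two (hn : 3 ≤ n) (i : Fin n) : i ≠ i + 1 + 1 := by
  intro h
  have hv := congrArg Fin.val h
  rw [Fin.val_add, Fin.val_add, Fin.val_one'] at hv
  exact nat_aux2 hn i.isLt hv.symm

lemma alpha_ne_zero {i j : Fin n} (h : i ≠ j) :
    (Finsupp.single i 1 - Finsupp.single j (1 : ℤ)) ≠ 0 := single_sub_ne_zero h

lemma emd_single_sub (e : Equiv.Perm (Fin n)) (i j : Fin n) :
    Finsupp.equivMapDomain (e : Fin n ≃ Fin n)
        (Finsupp.single i 1 - Finsupp.single j (1 : ℤ))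
      = Finsupp.single (e i) 1 - Finsupp.single (e j) 1 := by
  rw [emd_sub, Finsupp.equivMapDomain_single, Finsupp.equivMapDomain_single]

set_option maxHeartbeats 4000000 in
lemma braid_calc {K : Type*} [Field K] (a b x p q r u t : K) (ha : a ≠ 0) (hb : b ≠ 0)
    (h1a : 1 - a ≠ 0) (h1b : 1 - b ≠ 0) (h1ab : 1 - a * b ≠ 0) :
    (((t - u) / (1 - a⁻¹ * (a * b)) - (x - p) / (1 - a⁻¹)) / (1 - a * b) -
        ((r - q) / (1 - a * b) - (p - x) / (1 - a)) / (1 - b)) / (1 - a) =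
    (((t - r) / (1 - a * b * b⁻¹) - (x - q) / (1 - b⁻¹)) / (1 - a * b) -
        ((u - p) / (1 - a * b) - (q - x) / (1 - b)) / (1 - a)) / (1 - b) := by
  have e1 : a⁻¹ * (a * b) = b := by field_simp
  have e2 : a * b * b⁻¹ = a := by field_simp
  have e3 : (1 : K) - a⁻¹ = -((1 - a) / a) := by field_simp; ring
  have e4 : (1 : K) - b⁻¹ = -((1 - b) / b) := by field_simp; ring
  have hD1 : (1 - b) * (1 - a) * (1 - a * b) ≠ 0 := mul_ne_zero (mul_ne_zero h1b h1a) h1ab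
  have hD2 : (1 - a * b) * (1 - a) * (1 - b) ≠ 0 := mul_ne_zero (mul_ne_zero h1ab h1a) h1b
  have hD3 : (1 - a) * (1 - b) * (1 - a * b) ≠ 0 := mul_ne_zero (mul_ne_zero h1a h1b) h1ab
  have hD4 : (1 - a * b) * (1 - b) * (1 - a) ≠ 0 := mul_ne_zero (mul_ne_zero h1ab h1b) h1a
  rw [e1, e2, e3, e4, div_neg, div_neg, sub_neg_eq_add, sub_neg_eq_add,
    div_div_eq_mul_div, div_div_eq_mul_div,
    div_add_div _ _ h1b h1a, div_div, div_sub_div _ _ h1ab h1a, div_div,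
    div_sub_div _ _ hD1 hD2, div_div,
    div_add_div _ _ h1a h1b, div_div, div_sub_div _ _ h1ab h1b, div_div,
    div_sub_div _ _ hD3 hD4, div_div,
    div_eq_div_iff (mul_ne_zero (mul_ne_zero hD1 hD2) h1a)
      (mul_ne_zero (mul_ne_zero hD3 hD4) h1b)]
  ring

lemma comm_calc {K : Type*} [Field K] (c d x p q m : K) (hc : c ≠ 0) (hd : d ≠ 0) :
    ((m - p) / d - (q - x) / d) / c = ((m - q) / c - (p - x) / c) / d := by
  field_simp
  ring

end Stmt15Aux

open Stmt15Aux Equiv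

/-- the affine level-zero Demazure operators on `R(T)` satisfy the affine braid
relations. Here, for `i ∈ ℤ/nℤ` (realized as `Fin n` with cyclic successor `i + 1`), `T i` is
the unique `ℤ`-linear endomorphism of `R(T)` with
`(1 - e^{a_i - a_{i+1}}) · T_i(f) = s_i(f) - f`, where `s_i` exchanges `e^{a_i}` and
`e^{a_{i+1}}` (for `i = n` this is `T_0`, built from `s_θ` and `1 - e^{a_n - a_1}`). -/
theorem stmt15 (n : ℕ) [NeZero n] (hn : 3 ≤ n) (T : Fin n → RT n →ₗ[ℤ] RT n)
    (hT : ∀ i : Fin n, ∀ f : RT n,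
      (1 - eexp n (Finsupp.single i 1 - Finsupp.single (i + 1) 1)) * T i f
        = permRT n (Equiv.swap i (i + 1)) f - f) :
    (∀ i : Fin n, ∀ f : RT n, T i (T (i + 1) (T i f)) = T (i + 1) (T i (T (i + 1) f))) ∧
    (∀ i j : Fin n, j ≠ i + 1 → i ≠ j + 1 → ∀ f : RT n, T i (T j f) = T j (T i f)) := by
  classical
  have hTK : ∀ (k : Fin n) (g : RT n),
      iK n (T k g) = (SK (Equiv.swap k (k + 1)) (iK n g) - iK n g)
        / (1 - iK n (eexp n (Finsupp.single k 1 - Finsupp.single (k + 1) 1))) := by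
    intro k g
    have hne : (Finsupp.single k 1 - Finsupp.single (k + 1) 1 : Fin n →₀ ℤ) ≠ 0 :=
      alpha_ne_zero (fin_ne_add_one hn k)
    have hd : (1 : KT n) - iK n (eexp n (Finsupp.single k 1 - Finsupp.single (k + 1) 1)) ≠ 0 :=
      one_sub_iK_eexp_ne_zero hne
    rw [eq_div_iff hd, mul_comm]
    have h2 := congrArg (iK n) (hT k g)
    rw [map_mul, map_sub, map_sub, map_one] at h2
    rw [h2, SK_alg]
  constructor
  · intro i f
    apply iK_inj n
    have d01 : i ≠ i + 1 := fin_ne_add_one hn i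
    have d12 : i + 1 ≠ i + 1 + 1 := fin_ne_add_one hn (i + 1)
    have d02 : i ≠ i + 1 + 1 := fin_ne_add_two hn i
    have ha0 : iK n (eexp n (Finsupp.single i 1 - Finsupp.single (i + 1) 1)) ≠ 0 :=
      iK_eexp_ne_zero _
    have hb0 : iK n (eexp n (Finsupp.single (i + 1) 1 - Finsupp.single (i + 1 + 1) 1)) ≠ 0 :=
      iK_eexp_ne_zero _
    have h1a : (1 : KT n) - iK n (eexp n (Finsupp.single i 1 - Finsupp.single (i + 1) 1)) ≠ 0 :=
      one_sub_iK_eexp_ne_zero (alpha_ne_zero d01)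
    have h1b : (1 : KT n)
        - iK n (eexp n (Finsupp.single (i + 1) 1 - Finsupp.single (i + 1 + 1) 1)) ≠ 0 :=
      one_sub_iK_eexp_ne_zero (alpha_ne_zero d12)
    have hmul : iK n (eexp n (Finsupp.single i 1 - Finsupp.single (i + 1) 1))
          * iK n (eexp n (Finsupp.single (i + 1) 1 - Finsupp.single (i + 1 + 1) 1))
        = iK n (eexp n (Finsupp.single i 1 - Finsupp.single (i + 1 + 1) 1)) := by
      rw [← map_mul, ← eexp_add]
      congr 2
      abel
    have h1ab : (1 : KT n)
        - iK n (eexp n (Finsupp.single i 1 - Finsupp.single (i + 1) 1))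
          * iK n (eexp n (Finsupp.single (i + 1) 1 - Finsupp.single (i + 1 + 1) 1)) ≠ 0 := by
      rw [hmul]; exact one_sub_iK_eexp_ne_zero (alpha_ne_zero d02)
    have hSia : SK (swap i (i + 1)) (iK n (eexp n (Finsupp.single i 1 - Finsupp.single (i + 1) 1)))
        = (iK n (eexp n (Finsupp.single i 1 - Finsupp.single (i + 1) 1)))⁻¹ := by
      rw [SK_alg, permRT_eexp, emd_single_sub, swap_apply_left, swap_apply_right,
        show (Finsupp.single (i + 1) 1 - Finsupp.single i 1 : Fin n →₀ ℤ)
          = -(Finsupp.single i 1 - Finsupp.single (i + 1) 1) by abel, iK_eexp_neg]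
    have hSib : SK (swap i (i + 1))
          (iK n (eexp n (Finsupp.single (i + 1) 1 - Finsupp.single (i + 1 + 1) 1)))
        = iK n (eexp n (Finsupp.single i 1 - Finsupp.single (i + 1) 1))
          * iK n (eexp n (Finsupp.single (i + 1) 1 - Finsupp.single (i + 1 + 1) 1)) := by
      rw [SK_alg, permRT_eexp, emd_single_sub, swap_apply_right,
        swap_apply_of_ne_of_ne (Ne.symm d02) (Ne.symm d12), hmul]
    have hSja : SK (swap (i + 1) (i + 1 + 1))
          (iK n (eexp n (Finsupp.single i 1 - Finsupp.single (i + 1) 1)))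
        = iK n (eexp n (Finsupp.single i 1 - Finsupp.single (i + 1) 1))
          * iK n (eexp n (Finsupp.single (i + 1) 1 - Finsupp.single (i + 1 + 1) 1)) := by
      rw [SK_alg, permRT_eexp, emd_single_sub, swap_apply_left,
        swap_apply_of_ne_of_ne d01 d02, hmul]
    have hSjb : SK (swap (i + 1) (i + 1 + 1))
          (iK n (eexp n (Finsupp.single (i + 1) 1 - Finsupp.single (i + 1 + 1) 1)))
        = (iK n (eexp n (Finsupp.single (i + 1) 1 - Finsupp.single (i + 1 + 1) 1)))⁻¹ := by
      rw [SK_alg, permRT_eexp, emd_single_sub, swap_apply_left, swap_apply_right,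
        show (Finsupp.single (i + 1 + 1) 1 - Finsupp.single (i + 1) 1 : Fin n →₀ ℤ)
          = -(Finsupp.single (i + 1) 1 - Finsupp.single (i + 1 + 1) 1) by abel, iK_eexp_neg]
    have hSiSi : ∀ y : KT n, SK (swap i (i + 1)) (SK (swap i (i + 1)) y) = y :=
      fun y => SK_invol _ (Equiv.swap_mul_self _ _) y
    have hSjSj : ∀ y : KT n,
        SK (swap (i + 1) (i + 1 + 1)) (SK (swap (i + 1) (i + 1 + 1)) y) = y :=
      fun y => SK_invol _ (Equiv.swap_mul_self _ _) y
    have hperm : swap (i + 1) (i + 1 + 1) * swap i (i + 1) * swap (i + 1) (i + 1 + 1)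
        = swap i (i + 1) * swap (i + 1) (i + 1 + 1) * swap i (i + 1) := by
      have e1 := swap_mul_swap_mul_swap d01 d02
      rw [swap_comm (i + 1 + 1) i] at e1
      have e2 := swap_mul_swap_mul_swap (Ne.symm d12) (Ne.symm d02)
      rw [swap_comm (i + 1) i, swap_comm (i + 1 + 1) (i + 1)] at e2
      rw [e1, e2]
    have hbr : ∀ y : KT n,
        SK (swap (i + 1) (i + 1 + 1)) (SK (swap i (i + 1)) (SK (swap (i + 1) (i + 1 + 1)) y))
          = SK (swap i (i + 1)) (SK (swap (i + 1) (i + 1 + 1)) (SK (swap i (i + 1)) y)) := by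
      intro y
      rw [SK_comp, SK_comp, SK_comp, SK_comp, hperm]
    simp only [hTK]
    simp only [SK_div, SK_sub, SK_mul, SK_one, hSia, hSib, hSja, hSjb, hSiSi, hSjSj, hbr]
    exact braid_calc _ _ _ _ _ _ _ _ ha0 hb0 h1a h1b h1ab
  · intro i j hji hij f
    by_cases hij0 : i = j
    · subst hij0; rfl
    apply iK_inj n
    have d01 : i ≠ i + 1 := fin_ne_add_one hn i
    have d01' : j ≠ j + 1 := fin_ne_add_one hn j
    have h1a : (1 : KT n) - iK n (eexp n (Finsupp.single i 1 - Finsupp.single (i + 1) 1)) ≠ 0 :=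
      one_sub_iK_eexp_ne_zero (alpha_ne_zero d01)
    have h1b : (1 : KT n) - iK n (eexp n (Finsupp.single j 1 - Finsupp.single (j + 1) 1)) ≠ 0 :=
      one_sub_iK_eexp_ne_zero (alpha_ne_zero d01')
    have hne1 : i + 1 ≠ j + 1 := fun h => hij0 (add_right_cancel h)
    have hfixa : SK (swap j (j + 1))
          (iK n (eexp n (Finsupp.single i 1 - Finsupp.single (i + 1) 1)))
        = iK n (eexp n (Finsupp.single i 1 - Finsupp.single (i + 1) 1)) := by
      rw [SK_alg, permRT_eexp, emd_single_sub, swap_apply_of_ne_of_ne hij0 hij,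
        swap_apply_of_ne_of_ne (Ne.symm hji) hne1]
    have hfixb : SK (swap i (i + 1))
          (iK n (eexp n (Finsupp.single j 1 - Finsupp.single (j + 1) 1)))
        = iK n (eexp n (Finsupp.single j 1 - Finsupp.single (j + 1) 1)) := by
      rw [SK_alg, permRT_eexp, emd_single_sub,
        swap_apply_of_ne_of_ne (Ne.symm hij0) hji,
        swap_apply_of_ne_of_ne (Ne.symm hij) (Ne.symm hne1)]
    have hdis : (swap i (i + 1)).Disjoint (swap j (j + 1)) := by
      intro y
      by_cases hyi : y = i
      · right; subst hyi; exact swap_apply_of_ne_of_ne hij0 hij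
      by_cases hyi1 : y = i + 1
      · right; subst hyi1; exact swap_apply_of_ne_of_ne (Ne.symm hji) hne1
      · left; exact swap_apply_of_ne_of_ne hyi hyi1
    have hcomm : ∀ y : KT n, SK (swap i (i + 1)) (SK (swap j (j + 1)) y)
        = SK (swap j (j + 1)) (SK (swap i (i + 1)) y) := by
      intro y
      rw [SK_comp, SK_comp, hdis.commute.eq]
    simp only [hTK]
    simp only [SK_div, SK_sub, SK_one, hfixa, hfixb, hcomm]
    exact comm_calc _ _ _ _ _ _ h1a h1b
end
end
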